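/- arXiv:1510.04080 — 8 statements merged into one kernel-verified Lean document; each statement's English description precedes it below -/
import Mathlib

section
/- Let K be a field of characteristic 0, let Q ∈ K[x] be a nonzero polynomial and let α be a natural number. Then the set 𝓔_α(Q) is a subring of K(x)[[y]]: it contains 0 and 1, and for all A, B ∈ 𝓔_α(Q) one has A + B ∈ 𝓔_α(Q) and A·B ∈ 𝓔_α(Q). -/
open Polynomial PowerSeries

/-- `𝓔_α(Q)`: the set of power series in `K(x)[[y]]` of the form
`Σ_n c_n(x) yⁿ / Q(x)ⁿ` with `deg c_n ≤ n·α`. -/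
def Ecal (K : Type*) [Field K] (α : ℕ) (Q : Polynomial K) :
    Set (PowerSeries (RatFunc K)) :=
  {A | ∃ c : ℕ → Polynomial K, (∀ n, (c n).natDegree ≤ n * α) ∧
    ∀ n, PowerSeries.coeff n A =
      algebraMap (Polynomial K) (RatFunc K) (c n) /
        (algebraMap (Polynomial K) (RatFunc K) Q) ^ n}

theorem Ecal_subring (K : Type*) [Field K] [CharZero K]
    (Q : Polynomial K) (hQ : Q ≠ 0) (α : ℕ) :
    (0 : PowerSeries (RatFunc K)) ∈ Ecal K α Q ∧
    (1 : PowerSeries (RatFunc K)) ∈ Ecal K α Q ∧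
    ∀ A B : PowerSeries (RatFunc K), A ∈ Ecal K α Q → B ∈ Ecal K α Q →
      A + B ∈ Ecal K α Q ∧ A * B ∈ Ecal K α Q := by
  set φ := algebraMap (Polynomial K) (RatFunc K) with hφ
  have hq : φ Q ≠ 0 := by
    simp only [hφ, ne_eq, FaithfulSMul.algebraMap_eq_zero_iff]
    exact hQ
  refine ⟨⟨0, by simp, by simp⟩, ⟨fun n => if n = 0 then 1 else 0, ?_, ?_⟩, ?_⟩
  · intro n; by_cases h : n = 0 <;> simp [h]
  · intro n
    rcases Nat.eq_zero_or_pos n with h | h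
    · subst h; simp
    · simp [h.ne', PowerSeries.coeff_one]
  · rintro A B ⟨c, hc, hcA⟩ ⟨d, hd, hdB⟩
    constructor
    · refine ⟨fun n => c n + d n, ?_, ?_⟩
      · intro n
        exact le_trans (natDegree_add_le _ _) (max_le (hc n) (hd n))
      · intro n
        rw [map_add, hcA, hdB, map_add, ← add_div]
    · refine ⟨fun n => ∑ p ∈ Finset.HasAntidiagonal.antidiagonal n, c p.1 * d p.2, ?_, ?_⟩
      · intro n
        refine le_trans (Polynomial.natDegree_sum_le _ _) ?_
        rw [Finset.fold_max_le]
        refine ⟨Nat.zero_le _, ?_⟩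
        rintro ⟨i, j⟩ hij
        rw [Finset.HasAntidiagonal.mem_antidiagonal] at hij
        refine le_trans (natDegree_mul_le) ?_
        calc (c i).natDegree + (d j).natDegree ≤ i * α + j * α :=
              add_le_add (hc i) (hd j)
          _ = n * α := by rw [← add_mul, hij]
      · intro n
        rw [PowerSeries.coeff_mul, map_sum, Finset.sum_div]
        refine Finset.sum_congr rfl ?_
        rintro ⟨i, j⟩ hij
        rw [Finset.HasAntidiagonal.mem_antidiagonal] at hij
        rw [hcA, hdB, map_mul, div_mul_div_comm, ← pow_add, hij]
end

section
/- Let K be a field of characteristic 0, let Q, R ∈ K[x] be nonzero polynomials and let α, β be natural numbers. If A ∈ 𝓔_α(Q) and B ∈ 𝓔_β(R), then the product A·B belongs to 𝓔_γ(QR), where γ = max(α + deg R, β + deg Q). -/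
open Polynomial PowerSeries

theorem Ecal_mul_mem (K : Type*) [Field K] [CharZero K]
    (Q R : Polynomial K) (hQ : Q ≠ 0) (hR : R ≠ 0) (α β : ℕ)
    (A B : PowerSeries (RatFunc K)) (hA : A ∈ Ecal K α Q) (hB : B ∈ Ecal K β R) :
    A * B ∈ Ecal K (max (α + R.natDegree) (β + Q.natDegree)) (Q * R) := by
  obtain ⟨c, hc, hcA⟩ := hA
  obtain ⟨d, hd, hdB⟩ := hB
  set γ := max (α + R.natDegree) (β + Q.natDegree) with hγ
  refine ⟨fun n => ∑ p ∈ Finset.HasAntidiagonal.antidiagonal n, c p.1 * d p.2 * R ^ p.1 * Q ^ p.2, ?_, ?_⟩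
  · intro n
    apply Polynomial.natDegree_sum_le_of_forall_le
    intro p hp
    rw [Finset.HasAntidiagonal.mem_antidiagonal] at hp
    calc (c p.1 * d p.2 * R ^ p.1 * Q ^ p.2).natDegree
        ≤ (c p.1).natDegree + (d p.2).natDegree + (R ^ p.1).natDegree
            + (Q ^ p.2).natDegree := by
          refine (natDegree_mul_le).trans ?_
          gcongr
          exact (natDegree_mul_le).trans (by gcongr; exact natDegree_mul_le)
      _ ≤ p.1 * α + p.2 * β + p.1 * R.natDegree + p.2 * Q.natDegree := by
          gcongr
          · exact hc p.1
          · exact hd p.2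
          · exact natDegree_pow_le
          · exact natDegree_pow_le
      _ = p.1 * (α + R.natDegree) + p.2 * (β + Q.natDegree) := by ring
      _ ≤ p.1 * γ + p.2 * γ := by gcongr <;> [exact le_max_left _ _; exact le_max_right _ _]
      _ = n * γ := by rw [← add_mul, hp]
  · intro n
    rw [PowerSeries.coeff_mul, map_sum, Finset.sum_div]
    apply Finset.sum_congr rfl
    intro p hp
    rw [Finset.HasAntidiagonal.mem_antidiagonal] at hp
    rw [hcA p.1, hdB p.2]
    have hq : algebraMap (Polynomial K) (RatFunc K) Q ≠ 0 := by
      simpa using hQ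
    have hr : algebraMap (Polynomial K) (RatFunc K) R ≠ 0 := by
      simpa using hR
    subst hp
    simp only [map_mul, map_pow]
    field_simp
    ring
end

section
/- Let K be a field of characteristic 0 and let Q ∈ K[x,y] be a nonzero polynomial such that the polynomial q(x) = Q(x,0) satisfies q(0) ≠ 0. Let Q⋆ ∈ K[x,y] be a squarefree part of Q. Then the power series 1/Q ∈ K(x)[[y]] (the inverse of Q in K(x)[[y]], which exists since q ≠ 0) satisfies: q·(1/Q) belongs to 𝓔_δ(Q⋆(x,0)), where δ = deg_x Q⋆. -/
open Polynomial PowerSeries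

/-- `Qs` is a squarefree part of `Q`, i.e. `Q = Q₁ Q₂² ⋯ Q_m^m` is a squarefree
decomposition (the `Qᵢ` squarefree and pairwise coprime) and `Qs = Q₁ ⋯ Q_m`. -/
def IsSquarefreePart {R : Type*} [CommRing R] (Q Qs : R) : Prop :=
  ∃ (m : ℕ) (f : Fin m → R),
    (∀ i, Squarefree (f i)) ∧
    (∀ i j, i ≠ j → IsRelPrime (f i) (f j)) ∧
    Q = ∏ i, f i ^ ((i : ℕ) + 1) ∧
    Qs = ∏ i, f i

/-- `deg_x` of a bivariate polynomial in `K[x][y]` (inner variable `x`). -/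
noncomputable def degX {K : Type*} [Field K] (P : Polynomial (Polynomial K)) : ℕ :=
  P.support.sup fun j => (P.coeff j).natDegree

/-- A bivariate polynomial `Q ∈ K[x][y]` viewed as an element of `K(x)[[y]]`. -/
noncomputable def toSeries {K : Type*} [Field K] (Q : Polynomial (Polynomial K)) :
    PowerSeries (RatFunc K) :=
  ↑(Q.map (algebraMap (Polynomial K) (RatFunc K)))



section DegX

variable {K : Type*} [Field K]

lemma natDegree_coeff_le_degX (P : Polynomial (Polynomial K)) (j : ℕ) :
    (P.coeff j).natDegree ≤ degX P := by
  by_cases h : j ∈ P.support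
  · exact Finset.le_sup (f := fun j => (P.coeff j).natDegree) h
  · simp [Polynomial.notMem_support_iff.mp h]

noncomputable def transpose (K : Type*) [Field K] :
    Polynomial (Polynomial K) →+* Polynomial (Polynomial K) :=
  Polynomial.eval₂RingHom (Polynomial.mapRingHom Polynomial.C) (Polynomial.C Polynomial.X)

lemma transpose_coeff (P : Polynomial (Polynomial K)) (i j : ℕ) :
    ((transpose K P).coeff i).coeff j = (P.coeff j).coeff i := by
  induction P using Polynomial.induction_on' with
  | add p q hp hq => simp [hp, hq]
  | monomial n a =>
    simp only [transpose, coe_eval₂RingHom, eval₂_monomial, coe_mapRingHom]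
    rw [← Polynomial.C_pow, Polynomial.coeff_mul_C, Polynomial.coeff_map]
    simp only [Polynomial.coeff_C_mul, Polynomial.coeff_X_pow, Polynomial.coeff_monomial]
    split_ifs with h1 h2 h2 <;> simp_all

lemma transpose_eq_zero_iff {P : Polynomial (Polynomial K)} :
    transpose K P = 0 ↔ P = 0 := by
  constructor
  · intro h
    ext j i  -- ?
    have := transpose_coeff P i j
    rw [h] at this
    simpa using this.symm
  · rintro rfl; simp

lemma natDegree_transpose (P : Polynomial (Polynomial K)) :
    (transpose K P).natDegree = degX P := by
  rcases eq_or_ne P 0 with rfl | hP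
  · simp [degX]
  · apply le_antisymm
    · rw [Polynomial.natDegree_le_iff_coeff_eq_zero]
      intro i hi
      refine Polynomial.ext fun j => ?_
      rw [transpose_coeff, Polynomial.coeff_zero]
      exact Polynomial.coeff_eq_zero_of_natDegree_lt
        (lt_of_le_of_lt (natDegree_coeff_le_degX P j) hi)
    · obtain ⟨j₀, hj₀, hdeg⟩ := Finset.exists_mem_eq_sup P.support
        (Polynomial.support_nonempty.mpr hP) (fun j => (P.coeff j).natDegree)
      apply Polynomial.le_natDegree_of_ne_zero
      intro h
      have h2 := congrArg (fun q => Polynomial.coeff q j₀) h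
      simp only [transpose_coeff, Polynomial.coeff_zero] at h2
      rw [show degX P = (P.coeff j₀).natDegree from hdeg] at h2
      exact Polynomial.mem_support_iff.mp hj₀ (Polynomial.leadingCoeff_eq_zero.mp h2)

lemma degX_mul {P Q : Polynomial (Polynomial K)} (hP : P ≠ 0) (hQ : Q ≠ 0) :
    degX (P * Q) = degX P + degX Q := by
  rw [← natDegree_transpose, ← natDegree_transpose, ← natDegree_transpose, map_mul,
    Polynomial.natDegree_mul (by rwa [Ne, transpose_eq_zero_iff])
      (by rwa [Ne, transpose_eq_zero_iff])]

lemma sum_degX_le {ι : Type*} (s : Finset ι) (f : ι → Polynomial (Polynomial K))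
    (hf : ∀ i ∈ s, f i ≠ 0) :
    ∑ i ∈ s, degX (f i) ≤ degX (∏ i ∈ s, f i) := by
  induction s using Finset.cons_induction with
  | empty => simp
  | cons a s ha ih =>
    rw [Finset.prod_cons, Finset.sum_cons,
      degX_mul (hf a (Finset.mem_cons_self a s))
        (Finset.prod_ne_zero_iff.mpr fun i hi => hf i (Finset.mem_cons_of_mem hi))]
    exact Nat.add_le_add le_rfl (ih fun i hi => hf i (Finset.mem_cons_of_mem hi))

end DegX

section EcalLemmas

variable {K : Type*} [Field K]

lemma one_mem_Ecal (α : ℕ) (p : Polynomial K) : (1 : PowerSeries (RatFunc K)) ∈ Ecal K α p := by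
  refine ⟨fun n => if n = 0 then 1 else 0, fun n => by dsimp only; split <;> simp, fun n => ?_⟩
  rcases eq_or_ne n 0 with rfl | h
  · simp
  · simp [PowerSeries.coeff_one, h]

lemma algebraMap_ne_zero {p : Polynomial K} (hp : p ≠ 0) :
    algebraMap (Polynomial K) (RatFunc K) p ≠ 0 := by
  simpa using (RatFunc.algebraMap_ne_zero hp)

lemma Ecal.mul_same {α : ℕ} {p : Polynomial K} (hp : p ≠ 0)
    {A B : PowerSeries (RatFunc K)} (hA : A ∈ Ecal K α p) (hB : B ∈ Ecal K α p) :
    A * B ∈ Ecal K α p := by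
  obtain ⟨a, ha, hca⟩ := hA
  obtain ⟨b, hb, hcb⟩ := hB
  refine ⟨fun n => ∑ k ∈ Finset.range (n + 1), a k * b (n - k), fun n => ?_, fun n => ?_⟩
  · refine Polynomial.natDegree_sum_le_of_forall_le _ _ fun k hk => ?_
    have hk' : k ≤ n := Nat.lt_succ_iff.mp (Finset.mem_range.mp hk)
    calc (a k * b (n - k)).natDegree ≤ (a k).natDegree + (b (n - k)).natDegree :=
          Polynomial.natDegree_mul_le
      _ ≤ k * α + (n - k) * α := add_le_add (ha k) (hb (n - k))
      _ = n * α := by rw [← add_mul, Nat.add_sub_cancel' hk']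
  · rw [PowerSeries.coeff_mul, Finset.Nat.sum_antidiagonal_eq_sum_range_succ_mk,
      map_sum, Finset.sum_div]
    refine Finset.sum_congr rfl fun k hk => ?_
    have hk' : k ≤ n := Nat.lt_succ_iff.mp (Finset.mem_range.mp hk)
    rw [hca, hcb, map_mul, div_mul_div_comm, ← pow_add, Nat.add_sub_cancel' hk']

lemma Ecal.mul {α β : ℕ} {p r : Polynomial K} (hp : p ≠ 0) (hr : r ≠ 0)
    (hdp : p.natDegree ≤ α) (hdr : r.natDegree ≤ β)
    {A B : PowerSeries (RatFunc K)} (hA : A ∈ Ecal K α p) (hB : B ∈ Ecal K β r) :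
    A * B ∈ Ecal K (α + β) (p * r) := by
  obtain ⟨a, ha, hca⟩ := hA
  obtain ⟨b, hb, hcb⟩ := hB
  refine ⟨fun n => ∑ k ∈ Finset.range (n + 1), a k * r ^ k * (b (n - k) * p ^ (n - k)),
    fun n => ?_, fun n => ?_⟩
  · refine Polynomial.natDegree_sum_le_of_forall_le _ _ fun k hk => ?_
    have hk' : k ≤ n := Nat.lt_succ_iff.mp (Finset.mem_range.mp hk)
    calc (a k * r ^ k * (b (n - k) * p ^ (n - k))).natDegree
        ≤ (a k * r ^ k).natDegree + (b (n - k) * p ^ (n - k)).natDegree :=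
          Polynomial.natDegree_mul_le
      _ ≤ ((a k).natDegree + (r ^ k).natDegree) +
            ((b (n - k)).natDegree + (p ^ (n - k)).natDegree) :=
          add_le_add Polynomial.natDegree_mul_le Polynomial.natDegree_mul_le
      _ ≤ (k * α + k * β) + ((n - k) * β + (n - k) * α) := by
          refine add_le_add (add_le_add (ha k) ?_) (add_le_add (hb (n - k)) ?_)
          · rw [Polynomial.natDegree_pow]; exact Nat.mul_le_mul_left k hdr
          · rw [Polynomial.natDegree_pow]; exact Nat.mul_le_mul_left (n - k) hdp
      _ = n * (α + β) := by
          obtain ⟨l, rfl⟩ : ∃ l, n = k + l := ⟨n - k, (Nat.add_sub_cancel' hk').symm⟩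
          simp only [show k + l - k = l by omega]; ring
  · rw [PowerSeries.coeff_mul, Finset.Nat.sum_antidiagonal_eq_sum_range_succ_mk,
      map_sum, Finset.sum_div]
    refine Finset.sum_congr rfl fun k hk => ?_
    have hk' : k ≤ n := Nat.lt_succ_iff.mp (Finset.mem_range.mp hk)
    obtain ⟨l, rfl⟩ : ∃ l, n = k + l := ⟨n - k, (Nat.add_sub_cancel' hk').symm⟩
    simp only [show k + l - k = l by omega]
    have hp' := algebraMap_ne_zero hp
    have hr' := algebraMap_ne_zero hr
    rw [hca, hcb]
    rw [map_mul, map_mul, map_mul, map_pow, map_pow, map_mul, mul_pow, pow_add, pow_add]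
    field_simp

lemma Ecal.pow {α : ℕ} {p : Polynomial K} (hp : p ≠ 0)
    {A : PowerSeries (RatFunc K)} (hA : A ∈ Ecal K α p) (k : ℕ) : A ^ k ∈ Ecal K α p := by
  induction k with
  | zero => simpa using one_mem_Ecal α p
  | succ k ih => rw [pow_succ]; exact Ecal.mul_same hp ih hA

lemma Ecal.mono {α β : ℕ} (h : α ≤ β) (p : Polynomial K) : Ecal K α p ⊆ Ecal K β p := by
  rintro A ⟨c, h1, h2⟩
  exact ⟨c, fun n => (h1 n).trans (Nat.mul_le_mul_left n h), h2⟩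

lemma Ecal.prod {ι : Type*} (s : Finset ι) (A : ι → PowerSeries (RatFunc K)) (α : ι → ℕ)
    (p : ι → Polynomial K) (hp : ∀ i ∈ s, p i ≠ 0) (hd : ∀ i ∈ s, (p i).natDegree ≤ α i)
    (hA : ∀ i ∈ s, A i ∈ Ecal K (α i) (p i)) :
    (∏ i ∈ s, A i) ∈ Ecal K (∑ i ∈ s, α i) (∏ i ∈ s, p i) := by
  induction s using Finset.cons_induction with
  | empty => simpa using one_mem_Ecal 0 1
  | cons a s ha ih =>
    rw [Finset.prod_cons, Finset.sum_cons, Finset.prod_cons]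
    refine Ecal.mul (hp a (Finset.mem_cons_self a s))
      (Finset.prod_ne_zero_iff.mpr fun i hi => hp i (Finset.mem_cons_of_mem hi))
      (hd a (Finset.mem_cons_self a s))
      ((Polynomial.natDegree_prod_le _ _).trans
        (Finset.sum_le_sum fun i hi => hd i (Finset.mem_cons_of_mem hi)))
      (hA a (Finset.mem_cons_self a s))
      (ih (fun i hi => hp i (Finset.mem_cons_of_mem hi))
        (fun i hi => hd i (Finset.mem_cons_of_mem hi))
        (fun i hi => hA i (Finset.mem_cons_of_mem hi)))


lemma coeff_toSeries (P : Polynomial (Polynomial K)) (n : ℕ) :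
    PowerSeries.coeff n (toSeries P) =
      algebraMap (Polynomial K) (RatFunc K) (P.coeff n) := by
  rw [toSeries, Polynomial.coeff_coe, Polynomial.coeff_map]

lemma constantCoeff_toSeries (P : Polynomial (Polynomial K)) :
    PowerSeries.constantCoeff (toSeries P) =
      algebraMap (Polynomial K) (RatFunc K) (P.eval 0) := by
  rw [← PowerSeries.coeff_zero_eq_constantCoeff, coeff_toSeries,
    Polynomial.coeff_zero_eq_eval_zero]

lemma base_mem_Ecal (P : Polynomial (Polynomial K)) (hp : P.eval 0 ≠ 0) :
    PowerSeries.C (algebraMap (Polynomial K) (RatFunc K) (P.eval 0)) *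
      (toSeries P)⁻¹ ∈ Ecal K (degX P) (P.eval 0) := by
  set φ := algebraMap (Polynomial K) (RatFunc K) with hφ
  have hp' : φ (P.eval 0) ≠ 0 := algebraMap_ne_zero hp
  set A := PowerSeries.C (φ (P.eval 0)) * (toSeries P)⁻¹ with hA
  have hTinv : (toSeries P)⁻¹ * toSeries P = 1 := by
    rw [mul_comm]
    exact PowerSeries.mul_inv_cancel _ (by rw [constantCoeff_toSeries]; exact hp')
  have hAT : A * toSeries P = PowerSeries.C (φ (P.eval 0)) := by
    rw [hA, mul_assoc, hTinv, mul_one]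
  have key : ∀ n : ℕ, ∃ c : Polynomial K,
      φ c = φ (P.eval 0) ^ n * PowerSeries.coeff n A ∧
      c.natDegree ≤ n * degX P := by
    intro n
    induction n using Nat.strong_induction_on with
    | _ n ih =>
      rcases Nat.eq_zero_or_pos n with rfl | hn
      · refine ⟨1, ?_, by simp⟩
        rw [pow_zero, one_mul, PowerSeries.coeff_zero_eq_constantCoeff, hA, map_mul,
          PowerSeries.constantCoeff_C, PowerSeries.constantCoeff_inv, constantCoeff_toSeries,
          ← hφ, mul_inv_cancel₀ hp', map_one]
      · obtain ⟨m, rfl⟩ := Nat.exists_eq_succ_of_ne_zero hn.ne'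
        choose c hc hdeg using fun k (hk : k < m + 1) => ih k hk
        set c' : ℕ → Polynomial K := fun k => if h : k < m + 1 then c k h else 0 with hc'
        have hrec : PowerSeries.coeff (m + 1) A * φ (P.eval 0) =
            -∑ k ∈ Finset.range (m + 1),
              PowerSeries.coeff k A * φ (P.coeff (m + 1 - k)) := by
          have h0 : ∑ k ∈ Finset.range (m + 1 + 1),
              PowerSeries.coeff k A * φ (P.coeff (m + 1 - k)) = 0 := by
            have h1 := congrArg (PowerSeries.coeff (m + 1)) hAT
            rw [PowerSeries.coeff_mul, Finset.Nat.sum_antidiagonal_eq_sum_range_succ_mk,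
              PowerSeries.coeff_C, if_neg (Nat.succ_ne_zero m)] at h1
            simp only [coeff_toSeries] at h1
            exact h1
          rw [Finset.sum_range_succ] at h0
          have h2 : m + 1 - (m + 1) = 0 := by omega
          rw [h2, Polynomial.coeff_zero_eq_eval_zero] at h0
          linear_combination h0
        refine ⟨-∑ k ∈ Finset.range (m + 1), c' k * P.eval 0 ^ (m - k) * P.coeff (m + 1 - k),
          ?_, ?_⟩
        · have step : ∀ k ∈ Finset.range (m + 1),
              φ (c' k * P.eval 0 ^ (m - k) * P.coeff (m + 1 - k)) =
              φ (P.eval 0) ^ m *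
                (PowerSeries.coeff k A * φ (P.coeff (m + 1 - k))) := by
            intro k hk
            have hk' : k < m + 1 := Finset.mem_range.mp hk
            have hck : φ (c' k) = φ (P.eval 0) ^ k * PowerSeries.coeff k A := by
              have : c' k = c k hk' := by simp only [hc']; rw [dif_pos hk']
              rw [this]; exact hc k hk'
            rw [map_mul, map_mul, map_pow, hck,
              show φ (P.eval 0) ^ m = φ (P.eval 0) ^ k * φ (P.eval 0) ^ (m - k) by
                rw [← pow_add]; congr 1; omega]
            ring
          rw [map_neg, map_sum, Finset.sum_congr rfl step, ← Finset.mul_sum, ← mul_neg,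
            ← hrec, pow_succ]
          ring
        · rw [Polynomial.natDegree_neg]
          refine Polynomial.natDegree_sum_le_of_forall_le _ _ fun k hk => ?_
          have hk' : k < m + 1 := Finset.mem_range.mp hk
          calc (c' k * P.eval 0 ^ (m - k) * P.coeff (m + 1 - k)).natDegree
              ≤ (c' k * P.eval 0 ^ (m - k)).natDegree + (P.coeff (m + 1 - k)).natDegree :=
                Polynomial.natDegree_mul_le
            _ ≤ ((c' k).natDegree + (P.eval 0 ^ (m - k)).natDegree) +
                  (P.coeff (m + 1 - k)).natDegree :=
                Nat.add_le_add_right Polynomial.natDegree_mul_le _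
            _ ≤ (k * degX P + (m - k) * degX P) + degX P := by
                refine add_le_add (add_le_add ?_ ?_) (natDegree_coeff_le_degX P _)
                · rw [show c' k = c k hk' from by simp only [hc']; rw [dif_pos hk']]
                  exact hdeg k hk'
                · rw [Polynomial.natDegree_pow]
                  exact Nat.mul_le_mul_left _
                    (by rw [← Polynomial.coeff_zero_eq_eval_zero]
                        exact natDegree_coeff_le_degX P 0)
            _ = (k + (m - k) + 1) * degX P := by ring
            _ ≤ (m + 1) * degX P :=
                Nat.mul_le_mul_right _ (by omega)
  choose c hc hdeg using key
  refine ⟨c, hdeg, fun n => ?_⟩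
  rw [eq_div_iff (pow_ne_zero _ hp'), hc n]
  ring

end EcalLemmas

theorem inv_mem_Ecal (K : Type*) [Field K] [CharZero K]
    (Q Qs : Polynomial (Polynomial K)) (hQ : Q ≠ 0)
    (hq0 : (Q.eval 0).eval 0 ≠ 0)
    (hsf : IsSquarefreePart Q Qs) :
    IsUnit (toSeries Q) ∧
    PowerSeries.C (algebraMap (Polynomial K) (RatFunc K) (Q.eval 0)) *
        (toSeries Q)⁻¹ ∈ Ecal K (degX Qs) (Qs.eval 0) := by
  obtain ⟨m, f, -, -, hQprod, hQs⟩ := hsf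
  have hf0 : ∀ i, f i ≠ 0 := by
    intro i hi
    refine hQ ?_
    rw [hQprod]
    exact Finset.prod_eq_zero (Finset.mem_univ i) (by rw [hi, zero_pow (Nat.succ_ne_zero _)])
  have hqeval : Q.eval 0 = ∏ i, (f i).eval 0 ^ ((i : ℕ) + 1) := by
    rw [hQprod, Polynomial.eval_prod]
    exact Finset.prod_congr rfl fun i _ => by rw [Polynomial.eval_pow]
  have hfi0 : ∀ i : Fin m, ((f i).eval 0).eval 0 ≠ 0 := by
    intro i hi
    refine hq0 ?_
    rw [hqeval, Polynomial.eval_prod]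
    refine Finset.prod_eq_zero (Finset.mem_univ i) ?_
    rw [Polynomial.eval_pow, hi, zero_pow (Nat.succ_ne_zero _)]
  have hfe : ∀ i : Fin m, (f i).eval 0 ≠ 0 := fun i hi => hfi0 i (by rw [hi, Polynomial.eval_zero])
  have hq : Q.eval 0 ≠ 0 := fun h => hq0 (by rw [h, Polynomial.eval_zero])
  have hQc : PowerSeries.constantCoeff (toSeries Q) ≠ 0 := by
    rw [constantCoeff_toSeries]; exact algebraMap_ne_zero hq
  have hQinv : toSeries Q * (toSeries Q)⁻¹ = 1 := PowerSeries.mul_inv_cancel _ hQc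
  refine ⟨IsUnit.of_mul_eq_one _ hQinv, ?_⟩
  set B : Fin m → PowerSeries (RatFunc K) := fun i =>
    PowerSeries.C (algebraMap (Polynomial K) (RatFunc K) ((f i).eval 0)) *
      (toSeries (f i))⁻¹ with hB
  have hBmem : ∀ i, B i ^ ((i : ℕ) + 1) ∈ Ecal K (degX (f i)) ((f i).eval 0) :=
    fun i => Ecal.pow (hfe i) (base_mem_Ecal (f i) (hfe i)) _
  have hprodmem : (∏ i, B i ^ ((i : ℕ) + 1)) ∈
      Ecal K (∑ i, degX (f i)) (∏ i, (f i).eval 0) :=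
    Ecal.prod _ _ _ _ (fun i _ => hfe i)
      (fun i _ => by
        rw [← Polynomial.coeff_zero_eq_eval_zero]; exact natDegree_coeff_le_degX _ 0)
      (fun i _ => hBmem i)
  have htoS : ∀ R : Polynomial (Polynomial K), toSeries R =
      (Polynomial.coeToPowerSeries.ringHom.comp
        (Polynomial.mapRingHom (algebraMap (Polynomial K) (RatFunc K)))) R := fun _ => rfl
  have hTprod : toSeries Q = ∏ i, toSeries (f i) ^ ((i : ℕ) + 1) := by
    rw [htoS Q, hQprod, map_prod]
    exact Finset.prod_congr rfl fun i _ => by rw [map_pow, ← htoS]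
  have hBT : ∀ i, B i * toSeries (f i) =
      PowerSeries.C (algebraMap (Polynomial K) (RatFunc K) ((f i).eval 0)) := by
    intro i
    rw [hB]
    dsimp only
    rw [mul_assoc, mul_comm (toSeries (f i))⁻¹,
      PowerSeries.mul_inv_cancel _
        (by rw [constantCoeff_toSeries]; exact algebraMap_ne_zero (hfe i)), mul_one]
  have h1 : (∏ i, B i ^ ((i : ℕ) + 1)) * toSeries Q =
      PowerSeries.C (algebraMap (Polynomial K) (RatFunc K) (Q.eval 0)) := by
    rw [hTprod, ← Finset.prod_mul_distrib]
    have hterm : ∀ i : Fin m, B i ^ ((i : ℕ) + 1) * toSeries (f i) ^ ((i : ℕ) + 1) =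
        PowerSeries.C
          (algebraMap (Polynomial K) (RatFunc K) ((f i).eval 0 ^ ((i : ℕ) + 1))) := by
      intro i
      rw [← mul_pow, hBT i, ← map_pow, ← map_pow]
    rw [Finset.prod_congr rfl fun i _ => hterm i, ← map_prod, ← map_prod, ← hqeval]
  have hmain : PowerSeries.C
      (algebraMap (Polynomial K) (RatFunc K) (Q.eval 0)) * (toSeries Q)⁻¹ =
      ∏ i, B i ^ ((i : ℕ) + 1) := by
    rw [← h1, mul_assoc, hQinv, mul_one]
  rw [hmain, show Qs.eval 0 = ∏ i, (f i).eval 0 from by rw [hQs, Polynomial.eval_prod]]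
  refine Ecal.mono ?_ _ hprodmem
  rw [hQs]
  exact sum_degX_le _ _ fun i _ => hf0 i
end

section
/- Let K be a field of characteristic 0, let P ∈ K[x,y] be nonzero, and let P̃ ∈ K[x,y] denote the polynomial y^{ddeg(P)}·P(x/y, y). Let P⋆ be a squarefree part of P and let (P̃)⋆ be a squarefree part of P̃. Then (P̃)⋆ equals, up to a nonzero constant factor, the polynomial y^{ddeg(P⋆)}·P⋆(x/y, y), and consequently bideg((P̃)⋆) ≤ (deg_x P⋆, ddeg(P⋆) + deg_y P⋆). -/
open Polynomial

/-- The diagonal degree `ddeg P = max { i - j : a_{i,j} ≠ 0 }`. -/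
noncomputable def ddeg {K : Type*} [Field K] (P : Polynomial (Polynomial K)) : ℤ :=
  WithBot.unbotD 0 ((P.support.biUnion fun j =>
    (P.coeff j).support.image fun i : ℕ => (i : ℤ) - (j : ℤ))).max

/-- The field `K(x,y)` of rational functions, as the fraction field of `K[x][y]`. -/
abbrev Fq (K : Type*) [Field K] : Type _ := FractionRing (Polynomial (Polynomial K))

/-- The element `x` of `K(x,y)`. -/
noncomputable def xF (K : Type*) [Field K] : Fq K :=
  algebraMap (Polynomial (Polynomial K)) (Fq K) (C X)

/-- The element `y` of `K(x,y)`. -/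
noncomputable def yF (K : Type*) [Field K] : Fq K :=
  algebraMap (Polynomial (Polynomial K)) (Fq K) X

/-- Evaluation `P(x/y, y) ∈ K(x,y)` of a bivariate polynomial `P ∈ K[x][y]`. -/
noncomputable def substXY {K : Type*} [Field K] (P : Polynomial (Polynomial K)) : Fq K :=
  Polynomial.eval₂
    (Polynomial.eval₂RingHom
      ((algebraMap (Polynomial (Polynomial K)) (Fq K)).comp
        ((C : Polynomial K →+* Polynomial (Polynomial K)).comp
          (C : K →+* Polynomial K)))
      (xF K / yF K))
    (yF K) P

namespace SQF
variable {K : Type*} [Field K]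

noncomputable abbrev AF (K : Type*) [Field K] : Polynomial (Polynomial K) →+* Fq K :=
  algebraMap (Polynomial (Polynomial K)) (Fq K)

noncomputable def substHom (K : Type*) [Field K] : Polynomial (Polynomial K) →+* Fq K :=
  eval₂RingHom
    (eval₂RingHom ((AF K).comp
      ((C : Polynomial K →+* Polynomial (Polynomial K)).comp (C : K →+* Polynomial K)))
      (xF K / yF K))
    (yF K)

lemma substXY_eq (P : Polynomial (Polynomial K)) : substXY P = substHom K P := rfl

lemma AF_inj : Function.Injective (AF K) := IsFractionRing.injective _ _

lemma yF_ne : yF K ≠ 0 := by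
  simpa [yF, map_eq_zero_iff (AF K) AF_inj] using (X_ne_zero (R := Polynomial K))

lemma substHom_X : substHom K X = yF K := by simp [substHom]
lemma substHom_CX : substHom K (C X) = xF K / yF K := by simp [substHom]
lemma substHom_CC (c : K) : substHom K (C (C c)) = AF K (C (C c)) := by simp [substHom]

noncomputable def sig (K : Type*) [Field K] :
    Polynomial (Polynomial K) →+* Polynomial (Polynomial K) :=
  eval₂RingHom
    (eval₂RingHom ((C : Polynomial K →+* Polynomial (Polynomial K)).comp (C : K →+* Polynomial K))
      (C X * X)) X

lemma sig_X : sig K X = X := by simp [sig]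
lemma sig_CX : sig K (C X) = C X * X := by simp [sig]
lemma sig_CC (c : K) : sig K (C (C c)) = C (C c) := by simp [sig]

lemma substHom_sig (Q : Polynomial (Polynomial K)) : substHom K (sig K Q) = AF K Q := by
  have h : ((substHom K).comp (sig K)) = AF K := by
    apply Polynomial.ringHom_ext
    · intro a
      have h2 : (((substHom K).comp (sig K)).comp (C : Polynomial K →+* Polynomial (Polynomial K)))
          = (AF K).comp (C : Polynomial K →+* Polynomial (Polynomial K)) := by
        apply Polynomial.ringHom_ext
        · intro c
          show substHom K (sig K (C (C c))) = AF K (C (C c))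
          rw [sig_CC, substHom_CC]
        · show substHom K (sig K (C X)) = AF K (C X)
          rw [sig_CX, map_mul, substHom_CX, substHom_X, div_mul_cancel₀ _ yF_ne]
          rfl
      exact RingHom.congr_fun h2 a
    · show substHom K (sig K X) = AF K X
      rw [sig_X, substHom_X]; rfl
  exact RingHom.congr_fun h Q

lemma sig_inj : Function.Injective (sig K) := fun a b h =>
  AF_inj (by rw [← substHom_sig a, ← substHom_sig b, h])

noncomputable def Phi (K : Type*) [Field K] : Fq K →+* Fq K :=
  IsFractionRing.lift (g := (AF K).comp (sig K))
    (fun a b hab => sig_inj (AF_inj hab))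

lemma Phi_AF (a : Polynomial (Polynomial K)) : Phi K (AF K a) = AF K (sig K a) :=
  IsFractionRing.lift_algebraMap _ _

lemma Phi_yF : Phi K (yF K) = yF K := by
  have := Phi_AF (K := K) X
  rw [sig_X] at this
  exact this

lemma Phi_substHom (Q : Polynomial (Polynomial K)) : Phi K (substHom K Q) = AF K Q := by
  have h : ((Phi K).comp (substHom K)) = AF K := by
    apply Polynomial.ringHom_ext
    · intro a
      have h2 : (((Phi K).comp (substHom K)).comp (C : Polynomial K →+* Polynomial (Polynomial K)))
          = (AF K).comp (C : Polynomial K →+* Polynomial (Polynomial K)) := by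
        apply Polynomial.ringHom_ext
        · intro c
          show Phi K (substHom K (C (C c))) = AF K (C (C c))
          rw [substHom_CC, Phi_AF, sig_CC]
        · show Phi K (substHom K (C X)) = AF K (C X)
          rw [substHom_CX, map_div₀, Phi_yF]
          have hx : Phi K (xF K) = xF K * yF K := by
            have := Phi_AF (K := K) (C X)
            rw [sig_CX, map_mul] at this
            exact this
          rw [hx, mul_div_assoc, div_self yF_ne, mul_one]
          rfl
      exact RingHom.congr_fun h2 a
    · show Phi K (substHom K X) = AF K X
      rw [substHom_X, Phi_yF]; rfl
  exact RingHom.congr_fun h Q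

lemma le_ddeg {P : Polynomial (Polynomial K)} {i j : ℕ} (h : (P.coeff j).coeff i ≠ 0) :
    (i : ℤ) - j ≤ ddeg P := by
  have hj : j ∈ P.support := by
    rw [mem_support_iff]; intro h0; rw [h0] at h; simp at h
  have hi : i ∈ (P.coeff j).support := mem_support_iff.mpr h
  have hmem : ((i : ℤ) - j) ∈ P.support.biUnion
      (fun j => (P.coeff j).support.image fun i : ℕ => (i : ℤ) - (j : ℤ)) :=
    Finset.mem_biUnion.mpr ⟨j, hj, Finset.mem_image.mpr ⟨i, hi, rfl⟩⟩
  have hle := Finset.le_max hmem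
  rcases hmax : (P.support.biUnion
      (fun j => (P.coeff j).support.image fun i : ℕ => (i : ℤ) - (j : ℤ))).max with _ | m
  · rw [hmax] at hle; exact absurd hle (WithBot.not_coe_le_bot _)
  · rw [hmax] at hle
    rw [ddeg, hmax]
    show _ ≤ m
    exact WithBot.coe_le_coe.mp hle

lemma exists_ddeg {P : Polynomial (Polynomial K)} (hP : P ≠ 0) :
    ∃ i j : ℕ, (P.coeff j).coeff i ≠ 0 ∧ (i : ℤ) - j = ddeg P := by
  have hS : (P.support.biUnion
      (fun j => (P.coeff j).support.image fun i : ℕ => (i : ℤ) - (j : ℤ))).Nonempty := by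
    obtain ⟨j, hj⟩ := support_nonempty.mpr hP
    obtain ⟨i, hi⟩ := support_nonempty.mpr (mem_support_iff.mp hj)
    exact ⟨(i : ℤ) - j, Finset.mem_biUnion.mpr ⟨j, hj, Finset.mem_image.mpr ⟨i, hi, rfl⟩⟩⟩
  obtain ⟨m, hm⟩ := Finset.max_of_nonempty hS
  have hmem := Finset.mem_of_max hm
  rw [Finset.mem_biUnion] at hmem
  obtain ⟨j, hj, hmem⟩ := hmem
  rw [Finset.mem_image] at hmem
  obtain ⟨i, hi, hij⟩ := hmem
  refine ⟨i, j, mem_support_iff.mp hi, ?_⟩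
  rw [ddeg, hm]
  rw [← hij]
  rfl



lemma exists_tilde {P : Polynomial (Polynomial K)} (hP : P ≠ 0) :
    ∃ u : Polynomial (Polynomial K), ¬ (X ∣ u) ∧
      AF K u = yF K ^ (ddeg P) * substHom K P ∧
      (∀ k : ℕ, (u.coeff k).natDegree ≤ degX P) ∧
      ((u.natDegree : ℤ) ≤ ddeg P + P.natDegree) := by
  classical
  set d := ddeg P with hd
  set e : ℕ → ℕ → ℕ := fun i j => ((j : ℤ) - i + d).toNat with he
  have hecast : ∀ {i j : ℕ}, (P.coeff j).coeff i ≠ 0 → ((e i j : ℤ)) = (j : ℤ) - i + d := by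
    intro i j h
    have h1 : (0 : ℤ) ≤ (j : ℤ) - i + d := by have := le_ddeg h; omega
    simp only [he]
    omega
  set u : Polynomial (Polynomial K) := ∑ j ∈ P.support, ∑ i ∈ (P.coeff j).support,
      (monomial (e i j) (monomial i ((P.coeff j).coeff i)) : Polynomial (Polynomial K)) with hu
  obtain ⟨i0, j0, ha0, hij0⟩ := exists_ddeg hP
  have hj0 : j0 ∈ P.support := by
    rw [mem_support_iff]; intro h0; rw [h0] at ha0; simp at ha0
  have hi0 : i0 ∈ (P.coeff j0).support := mem_support_iff.mpr ha0
  refine ⟨u, ?_, ?_, ?_, ?_⟩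
  · rw [X_dvd_iff]
    intro h0
    have hC : (u.coeff 0).coeff i0 = (P.coeff j0).coeff i0 := by
      rw [hu]
      simp only [finset_sum_coeff, coeff_monomial,
        apply_ite (fun p : Polynomial K => p.coeff i0), coeff_zero]
      refine Eq.trans (Finset.sum_eq_single_of_mem j0 hj0 ?_) ?_
      · intro j hj hne
        apply Finset.sum_eq_zero
        intro i hi
        by_cases h1 : i = i0
        · subst h1
          have h4 := hecast (mem_support_iff.mp hi)
          have h5 : e i i ≠ 0 ∨ True := Or.inr trivial
          have h6 : e i j ≠ 0 := by
            intro hz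
            rw [hz] at h4
            have : (j : ℤ) = (j0 : ℤ) := by omega
            exact hne (by exact_mod_cast this)
          simp [h6]
        · simp [h1]
      · refine Eq.trans (Finset.sum_eq_single_of_mem i0 hi0 ?_) ?_
        · intro i hi hne; simp [hne]
        · have he0 : e i0 j0 = 0 := by simp only [he]; omega
          simp [he0]
    rw [h0] at hC
    simp only [coeff_zero] at hC
    exact ha0 hC.symm
  · have hsub : substHom K P = ∑ j ∈ P.support, (∑ i ∈ (P.coeff j).support,
        AF K (C (C ((P.coeff j).coeff i))) * (xF K / yF K) ^ i) * yF K ^ j := by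
      show eval₂ _ _ P = _
      rw [eval₂_eq_sum, Polynomial.sum]
      refine Finset.sum_congr rfl fun j hj => ?_
      congr 1
      show eval₂ _ _ (P.coeff j) = _
      rw [eval₂_eq_sum, Polynomial.sum]
      rfl
    rw [hu, map_sum, hsub, Finset.mul_sum]
    refine Finset.sum_congr rfl fun j hj => ?_
    rw [map_sum, Finset.sum_mul, Finset.mul_sum]
    refine Finset.sum_congr rfl fun i hi => ?_
    have hL : (AF K) ((monomial (e i j)) ((monomial i) ((P.coeff j).coeff i)))
        = AF K (C (C ((P.coeff j).coeff i))) * xF K ^ i * yF K ^ (e i j) := by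
      rw [← C_mul_X_pow_eq_monomial, ← C_mul_X_pow_eq_monomial, map_mul, map_pow, map_mul,
        map_pow, map_mul, map_pow]
      rfl
    rw [hL]
    have hc := hecast (mem_support_iff.mp hi)
    have hz : (yF K) ^ (e i j) = yF K ^ ((j : ℤ)) * (yF K ^ ((i : ℤ)))⁻¹ * yF K ^ d := by
      rw [← zpow_natCast (yF K) (e i j), hc, ← zpow_neg, ← zpow_add₀ yF_ne, ← zpow_add₀ yF_ne]
      congr 1
    rw [hz, div_pow, div_eq_mul_inv, zpow_natCast, zpow_natCast]
    ring
  · intro k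
    rw [hu]
    simp only [finset_sum_coeff]
    apply natDegree_sum_le_of_forall_le
    intro j hj
    apply natDegree_sum_le_of_forall_le
    intro i hi
    rw [coeff_monomial]
    split
    · exact (natDegree_monomial_le _).trans
        ((le_natDegree_of_ne_zero (mem_support_iff.mp hi)).trans
          (Finset.le_sup (f := fun j => (P.coeff j).natDegree) hj))
    · simp
  · have hj0n : j0 ≤ P.natDegree := le_natDegree_of_ne_zero (fun hh => ha0 (by rw [hh]; simp))
    have hN : (0 : ℤ) ≤ d + P.natDegree := by omega
    have hbound : u.natDegree ≤ (d + P.natDegree).toNat := by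
      rw [hu]
      apply natDegree_sum_le_of_forall_le
      intro j hj
      apply natDegree_sum_le_of_forall_le
      intro i hi
      refine (natDegree_monomial_le _).trans ?_
      have hc := hecast (mem_support_iff.mp hi)
      have hjn : j ≤ P.natDegree := le_natDegree_of_ne_zero (mem_support_iff.mp hj)
      omega
    have h2 : ((u.natDegree : ℤ)) ≤ (((d + P.natDegree).toNat : ℤ)) := by exact_mod_cast hbound
    omega

lemma AF_X : AF K (X : Polynomial (Polynomial K)) = yF K := rfl

lemma tilde_unique_aux {Q u w : Polynomial (Polynomial K)} (hu : ¬ (X ∣ u)) (hw : ¬ (X ∣ w))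
    {a b : ℤ} (h1 : AF K u = yF K ^ a * substHom K Q) (h2 : AF K w = yF K ^ b * substHom K Q)
    (hab : a ≤ b) : a = b ∧ u = w := by
  have hb : yF K ^ b = yF K ^ a * (AF K ((X : Polynomial (Polynomial K)) ^ (b - a).toNat)) := by
    rw [map_pow, AF_X, ← zpow_natCast (yF K) ((b - a).toNat),
      show (((b - a).toNat : ℤ)) = b - a from Int.toNat_of_nonneg (by omega),
      ← zpow_add₀ yF_ne]
    congr 1
    omega
  have heq : AF K w = AF K ((X : Polynomial (Polynomial K)) ^ (b - a).toNat * u) := by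
    rw [map_mul, h2, hb, h1]; ring
  have hw2 : w = (X : Polynomial (Polynomial K)) ^ (b - a).toNat * u := AF_inj heq
  by_cases hba : a = b
  · subst hba
    simp only [sub_self, Int.toNat_zero, pow_zero, one_mul] at hw2
    exact ⟨rfl, hw2.symm⟩
  · exfalso
    apply hw
    rw [hw2]
    exact dvd_mul_of_dvd_left (dvd_pow_self X (by omega)) u

lemma tilde_unique {Q u w : Polynomial (Polynomial K)} (hu : ¬ (X ∣ u)) (hw : ¬ (X ∣ w))
    {a b : ℤ} (h1 : AF K u = yF K ^ a * substHom K Q) (h2 : AF K w = yF K ^ b * substHom K Q) :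
    a = b ∧ u = w := by
  rcases le_total a b with hab | hab
  · exact tilde_unique_aux hu hw h1 h2 hab
  · obtain ⟨hx, hy⟩ := tilde_unique_aux hw hu h2 h1 hab
    exact ⟨hx.symm, hy.symm⟩

lemma isRelPrime_of_not_X_dvd {h : Polynomial (Polynomial K)} (hx : ¬ (X ∣ h)) :
    IsRelPrime h (X : Polynomial (Polynomial K)) := by
  intro z hz1 hz2
  obtain ⟨c, hc⟩ := hz2
  rcases (Polynomial.prime_X (R := Polynomial K)).irreducible.isUnit_or_isUnit hc with h1 | h1
  · exact h1
  · exfalso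
    apply hx
    obtain ⟨cu, rfl⟩ := h1
    have : (X : Polynomial (Polynomial K)) ∣ z := by
      refine ⟨(cu⁻¹ : (Polynomial (Polynomial K))ˣ), ?_⟩
      rw [hc, mul_assoc]
      simp
    exact this.trans hz1

lemma squarefree_tilde {Q u : Polynomial (Polynomial K)} (hQ : Squarefree Q)
    (hxu : ¬ (X ∣ u)) (hu : AF K u = yF K ^ (ddeg Q) * substHom K Q) : Squarefree u := by
  intro h hh
  have hu0 : u ≠ 0 := fun h0 => hxu (h0 ▸ dvd_zero X)
  have hh0 : h ≠ 0 := by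
    rintro rfl
    exact hu0 (zero_dvd_iff.mp (by simpa using hh))
  have hxh : ¬ (X ∣ h) := fun hd => hxu (hd.trans ((dvd_mul_right h h).trans hh))
  set d := ddeg Q with hd
  have hkey : (X : Polynomial (Polynomial K)) ^ ((-d).toNat) * sig K u
      = (X : Polynomial (Polynomial K)) ^ (d.toNat) * Q := by
    apply AF_inj
    rw [map_mul, map_mul, map_pow, map_pow, AF_X]
    have h1 : AF K (sig K u) = Phi K (AF K u) := (Phi_AF u).symm
    rw [h1, hu, map_mul, map_zpow₀, Phi_yF, Phi_substHom]
    rw [← zpow_natCast (yF K) ((-d).toNat), ← zpow_natCast (yF K) (d.toNat), ← mul_assoc,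
      ← zpow_add₀ yF_ne]
    congr 2
    omega
  have hsigh : sig K h ≠ 0 := fun h0 => hh0 (sig_inj (by rw [h0, map_zero]))
  obtain ⟨n, h', hxh', hsig⟩ := WfDvdMonoid.max_power_factor hsigh
    (Polynomial.irreducible_X (R := Polynomial K))
  have hdvd : h' * h' ∣ (X : Polynomial (Polynomial K)) ^ (d.toNat) * Q := by
    rw [← hkey]
    apply Dvd.dvd.mul_left
    have : sig K h * sig K h ∣ sig K u := by
      rw [← map_mul]
      exact map_dvd (sig K) hh
    refine dvd_trans ?_ this
    rw [hsig]
    exact ⟨X ^ n * X ^ n, by ring⟩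
  have hrel : IsRelPrime (h' * h') ((X : Polynomial (Polynomial K)) ^ d.toNat) := by
    have hbase : IsRelPrime h' (X : Polynomial (Polynomial K)) :=
      isRelPrime_of_not_X_dvd hxh'
    have h2 : IsRelPrime (h' * h') (X : Polynomial (Polynomial K)) := hbase.mul_left hbase
    clear hdvd
    induction d.toNat with
    | zero => simpa using isRelPrime_one_right
    | succ k ih => rw [pow_succ]; exact ih.mul_right h2
  have hQdvd : h' * h' ∣ Q := hrel.dvd_of_dvd_mul_left hdvd
  have hunit' : IsUnit h' := hQ h' hQdvd
  obtain ⟨r, hr, hCr⟩ := Polynomial.isUnit_iff.mp hunit'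
  obtain ⟨c, hc, hCc⟩ := Polynomial.isUnit_iff.mp hr
  have hh'e : h' = C (C c) := by rw [← hCr, ← hCc]
  have hAFh : AF K h = yF K ^ n * AF K (C (C c)) := by
    rw [← substHom_sig h, hsig, hh'e, map_mul, map_pow, substHom_X, substHom_CC]
  have hhE : h = (X : Polynomial (Polynomial K)) ^ n * C (C c) := by
    apply AF_inj
    rw [map_mul, map_pow, AF_X, hAFh]
  rcases Nat.eq_zero_or_pos n with hn | hn
  · rw [hn, pow_zero, one_mul] at hhE
    rw [hhE]
    exact (Polynomial.isUnit_C.mpr (Polynomial.isUnit_C.mpr hc))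
  · exfalso
    apply hxh
    rw [hhE]
    exact dvd_mul_of_dvd_left (dvd_pow_self X hn.ne') _

lemma squarefree_prod_fin {M : Type*} [CommMonoidWithZero M] [IsCancelMulZero M] [DecompositionMonoid M]
    {m : ℕ} (f : Fin m → M) (hsf : ∀ i, Squarefree (f i))
    (hrp : ∀ i j, i ≠ j → IsRelPrime (f i) (f j)) : Squarefree (∏ i, f i) := by
  have key : ∀ s : Finset (Fin m), Squarefree (∏ i ∈ s, f i) := by
    intro s
    induction s using Finset.induction with
    | empty => simpa using squarefree_one
    | @insert a s hns ih =>
      rw [Finset.prod_insert hns]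
      exact squarefree_mul_iff.mpr
        ⟨IsRelPrime.prod_right (fun j hj => hrp a j (fun hh => hns (hh ▸ hj))), hsf a, ih⟩
  exact key Finset.univ

open UniqueFactorizationMonoid in
lemma assoc_radical_of_squarefree {M : Type*} [CommMonoidWithZero M] [IsCancelMulZero M]
    [NormalizationMonoid M] [UniqueFactorizationMonoid M]
    {a : M} (ha : a ≠ 0) (hsq : Squarefree a) : Associated (radical a) a := by
  classical
  have hnd := (squarefree_iff_nodup_normalizedFactors ha).mp hsq
  have hr : radical a = (normalizedFactors a).prod := by
    rw [radical, ← Finset.prod_val, primeFactors, Multiset.toFinset_val,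
      Multiset.dedup_eq_self.mpr hnd]
  rw [hr]
  exact prod_normalizedFactors ha

open UniqueFactorizationMonoid in
lemma radical_eq_radical_of_dvd_iff {M : Type*} [CommMonoidWithZero M] [IsCancelMulZero M]
    [NormalizationMonoid M] [UniqueFactorizationMonoid M] {a b : M} (ha : a ≠ 0) (hb : b ≠ 0)
    (h : ∀ p : M, Prime p → (p ∣ a ↔ p ∣ b)) : radical a = radical b := by
  classical
  have key : ∀ {x y : M}, x ≠ 0 → y ≠ 0 → (∀ p : M, Prime p → (p ∣ x → p ∣ y)) →
      ∀ q ∈ (normalizedFactors x).toFinset, q ∈ (normalizedFactors y).toFinset := by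
    intro x y hx hy hxy q hq
    rw [Multiset.mem_toFinset] at hq ⊢
    have hp := prime_of_normalized_factor q hq
    have hd : q ∣ y := hxy q hp (dvd_of_mem_normalizedFactors hq)
    obtain ⟨q', hq', hass⟩ := exists_mem_normalizedFactors_of_dvd hy hp.irreducible hd
    have : q = q' := by
      rw [← normalize_normalized_factor q hq, ← normalize_normalized_factor q' hq']
      exact normalize_eq_normalize hass.dvd hass.symm.dvd
    rwa [this]
  have hfin : (normalizedFactors a).toFinset = (normalizedFactors b).toFinset := by
    apply Finset.Subset.antisymm
    · exact fun q hq => key ha hb (fun p hp => (h p hp).mp) q hq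
    · exact fun q hq => key hb ha (fun p hp => (h p hp).mpr) q hq
  rw [radical, radical, primeFactors, primeFactors, hfin]

lemma prod_tilde {m : ℕ} (f u : Fin m → Polynomial (Polynomial K)) (n : Fin m → ℕ)
    (hx : ∀ i, ¬ (X ∣ u i))
    (hfu : ∀ i, AF K (u i) = yF K ^ (ddeg (f i)) * substHom K (f i)) :
    ∀ s : Finset (Fin m), ∃ e : ℤ, (¬ (X ∣ ∏ i ∈ s, u i ^ n i)) ∧
      AF K (∏ i ∈ s, u i ^ n i) = yF K ^ e * substHom K (∏ i ∈ s, f i ^ n i) := by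
  intro s
  induction s using Finset.induction with
  | empty =>
    refine ⟨0, ?_, by simp⟩
    simp only [Finset.prod_empty]
    intro hdvd
    exact Polynomial.not_isUnit_X (R := Polynomial K) (isUnit_of_dvd_one hdvd)
  | @insert a s hns ih =>
    obtain ⟨e, hxe, he⟩ := ih
    refine ⟨ddeg (f a) * (n a : ℤ) + e, ?_, ?_⟩
    · rw [Finset.prod_insert hns]
      intro hdvd
      rcases (Polynomial.prime_X (R := Polynomial K)).2.2 _ _ hdvd with hcase | hcase
      · exact hx a ((Polynomial.prime_X (R := Polynomial K)).dvd_of_dvd_pow hcase)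
      · exact hxe hcase
    · rw [Finset.prod_insert hns, Finset.prod_insert hns, map_mul, map_mul, map_pow, map_pow,
        he, hfu a, mul_pow, ← zpow_natCast (yF K ^ (ddeg (f a))) (n a), ← zpow_mul,
        zpow_add₀ yF_ne]
      ring

end SQF

theorem squarefree_part_tilde (K : Type*) [Field K] [CharZero K]
    (P Pt Ps Pts : Polynomial (Polynomial K)) (hP : P ≠ 0)
    (hPt : algebraMap (Polynomial (Polynomial K)) (Fq K) Pt =
      yF K ^ (ddeg P) * substXY P)
    (hPs : IsSquarefreePart P Ps)
    (hPts : IsSquarefreePart Pt Pts) :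
    (∃ c : K, c ≠ 0 ∧
      algebraMap (Polynomial (Polynomial K)) (Fq K) Pts =
        algebraMap (Polynomial (Polynomial K)) (Fq K) (C (C c)) *
          (yF K ^ (ddeg Ps) * substXY Ps)) ∧
    degX Pts ≤ degX Ps ∧
    (Pts.natDegree : ℤ) ≤ ddeg Ps + Ps.natDegree := by
  classical
  letI : NormalizationMonoid (Polynomial (Polynomial K)) :=
    UniqueFactorizationMonoid.strongNormalizationMonoid.toNormalizationMonoid
  obtain ⟨m, f, hsf, hrp, hPeq, hPseq⟩ := hPs
  obtain ⟨mg, g, hsg, hrg, hPteq, hPtseq⟩ := hPts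
  have hf0 : ∀ i, f i ≠ 0 := by
    intro i hi
    apply hP
    rw [hPeq]
    exact Finset.prod_eq_zero (Finset.mem_univ i) (by rw [hi, zero_pow (Nat.succ_ne_zero _)])
  have hPs0 : Ps ≠ 0 := by
    rw [hPseq]
    exact Finset.prod_ne_zero_iff.mpr (fun i _ => hf0 i)
  choose uu hchoice using fun i => SQF.exists_tilde (hf0 i)
  have hxu : ∀ i, ¬ ((X : Polynomial (Polynomial K)) ∣ uu i) := fun i => (hchoice i).1
  have huu : ∀ i, SQF.AF K (uu i) = yF K ^ (ddeg (f i)) * SQF.substHom K (f i) :=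
    fun i => (hchoice i).2.1
  obtain ⟨ustar, hxustar, hustar, hdegXu, hdegYu⟩ := SQF.exists_tilde hPs0
  obtain ⟨w, hxw, hw, -, -⟩ := SQF.exists_tilde hP
  have hPtw : Pt = w := by
    apply SQF.AF_inj
    rw [hw, ← SQF.substXY_eq]
    exact hPt
  obtain ⟨e1, hxV, hV⟩ := SQF.prod_tilde f uu (fun i => (i : ℕ) + 1) hxu huu Finset.univ
  rw [← hPeq] at hV
  have hPtV : Pt = ∏ i, uu i ^ ((i : ℕ) + 1) := by
    rw [hPtw]
    exact (SQF.tilde_unique hxw hxV hw hV).2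
  obtain ⟨e2, hxU, hU⟩ := SQF.prod_tilde f uu (fun _ => 1) hxu huu Finset.univ
  simp only [pow_one] at hxU hU
  rw [← hPseq] at hU
  have hUeq : ustar = ∏ i, uu i := (SQF.tilde_unique hxustar hxU hustar hU).2
  have hsqPs : Squarefree Ps := by
    rw [hPseq]
    exact SQF.squarefree_prod_fin f hsf hrp
  have hsqustar : Squarefree ustar := SQF.squarefree_tilde hsqPs hxustar hustar
  have hPt0 : Pt ≠ 0 := by
    rw [hPtw]
    exact fun h0 => hxw (h0 ▸ dvd_zero X)
  have hg0 : ∀ j, g j ≠ 0 := by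
    intro j hj
    apply hPt0
    rw [hPteq]
    exact Finset.prod_eq_zero (Finset.mem_univ j) (by rw [hj, zero_pow (Nat.succ_ne_zero _)])
  have hPts0 : Pts ≠ 0 := by
    rw [hPtseq]
    exact Finset.prod_ne_zero_iff.mpr (fun j _ => hg0 j)
  have hustar0 : ustar ≠ 0 := fun h0 => hxustar (h0 ▸ dvd_zero X)
  have hsqPts : Squarefree Pts := by
    rw [hPtseq]
    exact SQF.squarefree_prod_fin g hsg hrg
  have hiff1 : ∀ p : Polynomial (Polynomial K), Prime p → (p ∣ ustar ↔ p ∣ Pt) := by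
    intro p hp
    rw [hUeq, hPtV]
    constructor
    · intro hdvd
      obtain ⟨i, -, hi⟩ := (hp.dvd_finset_prod_iff _).mp hdvd
      exact (hi.trans (dvd_pow_self (uu i) (Nat.succ_ne_zero _))).trans
        (Finset.dvd_prod_of_mem _ (Finset.mem_univ i))
    · intro hdvd
      obtain ⟨i, -, hi⟩ := (hp.dvd_finset_prod_iff _).mp hdvd
      exact (hp.dvd_of_dvd_pow hi).trans (Finset.dvd_prod_of_mem _ (Finset.mem_univ i))
  have hiff2 : ∀ p : Polynomial (Polynomial K), Prime p → (p ∣ Pts ↔ p ∣ Pt) := by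
    intro p hp
    rw [hPtseq, hPteq]
    constructor
    · intro hdvd
      obtain ⟨j, -, hj⟩ := (hp.dvd_finset_prod_iff _).mp hdvd
      exact (hj.trans (dvd_pow_self (g j) (Nat.succ_ne_zero _))).trans
        (Finset.dvd_prod_of_mem _ (Finset.mem_univ j))
    · intro hdvd
      obtain ⟨j, -, hj⟩ := (hp.dvd_finset_prod_iff _).mp hdvd
      exact (hp.dvd_of_dvd_pow hj).trans (Finset.dvd_prod_of_mem _ (Finset.mem_univ j))
  have hrad : UniqueFactorizationMonoid.radical ustar = UniqueFactorizationMonoid.radical Pts :=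
    (SQF.radical_eq_radical_of_dvd_iff hustar0 hPt0 hiff1).trans
      (SQF.radical_eq_radical_of_dvd_iff hPts0 hPt0 hiff2).symm
  have hassoc : Associated ustar Pts :=
    ((SQF.assoc_radical_of_squarefree hustar0 hsqustar).symm.trans
      (hrad ▸ SQF.assoc_radical_of_squarefree hPts0 hsqPts))
  obtain ⟨v, hv⟩ := hassoc
  obtain ⟨r, hr, hCr⟩ := Polynomial.isUnit_iff.mp v.isUnit
  obtain ⟨c, hc, hCc⟩ := Polynomial.isUnit_iff.mp hr
  have hveq : (v : Polynomial (Polynomial K)) = C (C c) := by rw [← hCr, ← hCc]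
  have hPtsEq : Pts = ustar * C (C c) := by rw [← hv, hveq]
  refine ⟨⟨c, hc.ne_zero, ?_⟩, ?_, ?_⟩
  · show SQF.AF K Pts = SQF.AF K (C (C c)) * (yF K ^ (ddeg Ps) * substXY Ps)
    rw [SQF.substXY_eq, hPtsEq, map_mul, hustar]
    ring
  · have hcoe : ∀ k, (Pts.coeff k).natDegree ≤ degX Ps := by
      intro k
      rw [hPtsEq, coeff_mul_C]
      refine natDegree_mul_le.trans ?_
      simpa [natDegree_C] using hdegXu k
    exact Finset.sup_le fun k _ => hcoe k
  · have h4 : Pts.natDegree ≤ ustar.natDegree := by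
      rw [hPtsEq]
      exact natDegree_mul_le.trans (by simp)
    omega
end

section
/- Let K be a field of characteristic 0 and let P ∈ K[y] be a separable polynomial of degree d whose Galois group over K is the full symmetric group S_d, and whose roots α_1, …, α_d (in a splitting field) are algebraically independent over ℚ. Then for every integer c with 1 ≤ c ≤ d, the polynomial Σ_c P = Π_{i_1 < ⋯ < i_c} (y − (α_{i_1} + ⋯ + α_{i_c})), which has coefficients in K and degree C(d,c), is irreducible in K[y]. -/
open Polynomial

theorem sigma_c_irreducible (K L : Type*) [Field K] [CharZero K]
    [Field L] [CharZero L] [Algebra K L]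
    (P : Polynomial K) (d : ℕ) (hd : P.natDegree = d)
    (hsep : P.Separable)
    (hsplit : IsSplittingField K L P)
    (α : Fin d → L)
    (hroots : P.map (algebraMap K L) =
      C (algebraMap K L P.leadingCoeff) * ∏ i : Fin d, (X - C (α i)))
    (hgal : ∀ σ : Equiv.Perm (Fin d), ∃ g : L ≃ₐ[K] L, ∀ i, g (α i) = α (σ i))
    (hind : AlgebraicIndependent ℚ α)
    (c : ℕ) (hc1 : 1 ≤ c) (hcd : c ≤ d) :
    ∃ Q : Polynomial K,
      Q.map (algebraMap K L) =
        ∏ s ∈ Finset.powersetCard c (Finset.univ : Finset (Fin d)),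
          (X - C (∑ i ∈ s, α i)) ∧
      Q.natDegree = Nat.choose d c ∧
      Irreducible Q := by
  classical
  have hP0 : P ≠ 0 := by
    rintro rfl
    rw [natDegree_zero] at hd
    omega
  haveI := hsplit
  haveI : FiniteDimensional K L := IsSplittingField.finiteDimensional L P
  haveI : IsGalois K L := IsGalois.of_separable_splitting_field hsep
  set 𝒮 := Finset.powersetCard c (Finset.univ : Finset (Fin d)) with h𝒮
  set β : Finset (Fin d) → L := fun s => ∑ i ∈ s, α i with hβ
  set R : L[X] := ∏ s ∈ 𝒮, (X - C (β s)) with hR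
  -- injectivity of subset sums
  have hinj : Set.InjOn β ↑𝒮 := by
    intro s hs t ht hst
    by_contra hne
    have hcs : s.card = c := (Finset.mem_powersetCard.mp hs).2
    have hct : t.card = c := (Finset.mem_powersetCard.mp ht).2
    have hsd : (s \ t).Nonempty := by
      rw [Finset.sdiff_nonempty]
      intro hsub
      exact hne (Finset.eq_of_subset_of_card_le hsub (by omega))
    obtain ⟨j, hj⟩ := hsd
    obtain ⟨hjs, hjt⟩ := Finset.mem_sdiff.mp hj
    have hlin := hind.linearIndependent
    rw [Fintype.linearIndependent_iff] at hlin
    have h0 : ∑ i : Fin d,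
        ((if i ∈ s then (1 : ℚ) else 0) - if i ∈ t then 1 else 0) • α i = 0 := by
      simp only [sub_smul, ite_smul, one_smul, zero_smul, Finset.sum_sub_distrib]
      rw [Finset.sum_ite_mem, Finset.sum_ite_mem, Finset.univ_inter, Finset.univ_inter]
      rw [show (∑ i ∈ s, α i) = β s from rfl, show (∑ i ∈ t, α i) = β t from rfl, hst,
        sub_self]
    have := hlin _ h0 j
    simp [hjs, hjt] at this
  -- each automorphism permutes the roots
  have hperm : ∀ g : L ≃ₐ[K] L, ∃ σ : Equiv.Perm (Fin d), ∀ i, g (α i) = α (σ i) := by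
    intro g
    have hα : ∀ i, ∃ j, g (α i) = α j := by
      intro i
      have h1 : (aeval (α i)) P = 0 := by
        rw [aeval_def, ← eval_map, hroots]
        simp only [eval_mul, eval_prod, eval_sub, eval_X, eval_C]
        exact mul_eq_zero_of_right _ (Finset.prod_eq_zero (Finset.mem_univ i) (sub_self _))
      have h2 : (aeval (g (α i))) P = 0 := by
        rw [aeval_algHom_apply g (α i) P, h1, map_zero]
      rw [aeval_def, ← eval_map, hroots] at h2
      simp only [eval_mul, eval_prod, eval_sub, eval_X, eval_C] at h2
      have hlc : algebraMap K L P.leadingCoeff ≠ 0 := by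
        simpa using (map_ne_zero_iff _ (algebraMap K L).injective).mpr
          (leadingCoeff_ne_zero.mpr hP0)
      rcases mul_eq_zero.mp h2 with h | h
      · exact absurd h hlc
      · obtain ⟨j, _, hj⟩ := Finset.prod_eq_zero_iff.mp h
        exact ⟨j, sub_eq_zero.mp hj⟩
    choose f hf using hα
    have hαinj : Function.Injective α := hind.injective
    have hfinj : Function.Injective f := by
      intro i j hij
      apply hαinj
      apply g.injective
      rw [hf i, hf j, hij]
    exact ⟨Equiv.ofBijective f ((Finite.injective_iff_bijective).mp hfinj), hf⟩
  -- coefficients of R are fixed by the Galois group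
  have hfix : ∀ (g : L ≃ₐ[K] L) (n : ℕ), g (R.coeff n) = R.coeff n := by
    intro g n
    obtain ⟨σ, hσ⟩ := hperm g
    have hβσ : ∀ s, (g : L →+* L) (β s) = β (s.image σ) := by
      intro s
      rw [hβ]
      simp only
      rw [map_sum]
      rw [Finset.sum_image (fun x _ y _ h => σ.injective h)]
      exact Finset.sum_congr rfl fun i _ => hσ i
    have hmap : R.map (g : L →+* L) = R := by
      rw [hR, Polynomial.map_prod]
      simp only [Polynomial.map_sub, Polynomial.map_X, Polynomial.map_C]
      refine Finset.prod_nbij' (fun s => s.image σ) (fun s => s.image σ.symm) ?_ ?_ ?_ ?_ ?_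
      · intro s hs
        rw [Finset.mem_powersetCard_univ] at hs ⊢
        rw [Finset.card_image_of_injective _ σ.injective, hs]
      · intro s hs
        rw [Finset.mem_powersetCard_univ] at hs ⊢
        rw [Finset.card_image_of_injective _ σ.symm.injective, hs]
      · intro s _
        simp [Finset.image_image, Function.comp_def]
      · intro s _
        simp [Finset.image_image, Function.comp_def]
      · intro s _
        rw [hβσ s]
    conv_rhs => rw [← hmap]
    rw [coeff_map]
    rfl
  -- R lifts to K[X]
  have hbot : IntermediateField.fixedField (⊤ : Subgroup (L ≃ₐ[K] L)) = ⊥ := by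
    have h := (@IsGalois.tfae K _ L _ _ _).out 0 1
    exact h.mp ‹IsGalois K L›
  have hlift : R ∈ Polynomial.lifts (algebraMap K L) := by
    rw [lifts_iff_coeff_lifts]
    intro n
    have hmem : R.coeff n ∈ IntermediateField.fixedField (⊤ : Subgroup (L ≃ₐ[K] L)) :=
      fun g => hfix g.1 n
    rw [hbot, IntermediateField.mem_bot] at hmem
    exact hmem
  obtain ⟨Q, hQ⟩ := (Polynomial.mem_lifts _).mp hlift
  -- degrees and monicity
  have hRmonic : R.Monic := monic_prod_of_monic _ _ fun s _ => monic_X_sub_C _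
  have hRdeg : R.natDegree = Nat.choose d c := by
    rw [hR, natDegree_prod _ _ fun s _ => X_sub_C_ne_zero (β s)]
    simp [h𝒮, Finset.card_powersetCard, natDegree_X_sub_C]
  have hQdeg : Q.natDegree = Nat.choose d c := by
    rw [← natDegree_map (algebraMap K L), hQ, hRdeg]
  have hQmonic : Q.Monic := by
    rw [← monic_map_iff (f := algebraMap K L), hQ]
    exact hRmonic
  -- a distinguished root
  obtain ⟨s₀, hs₀⟩ := Finset.powersetCard_nonempty.mpr
    (show c ≤ (Finset.univ : Finset (Fin d)).card by simpa using hcd)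
  have hxint : IsIntegral K (β s₀) := .of_finite K _
  have haeval : (aeval (β s₀)) Q = 0 := by
    rw [aeval_def, ← eval_map, hQ, hR, eval_prod]
    exact Finset.prod_eq_zero hs₀ (by simp)
  have hdvd : minpoly K (β s₀) ∣ Q := minpoly.dvd K _ haeval
  -- transitivity of the Galois action on subset sums
  have htrans : ∀ t ∈ 𝒮, ∃ g : L ≃ₐ[K] L, g (β s₀) = β t := by
    intro t ht
    have hcs : s₀.card = c := Finset.mem_powersetCard_univ.mp hs₀
    have hct : t.card = c := Finset.mem_powersetCard_univ.mp ht
    have hcc : (s₀ᶜ).card = (tᶜ).card := by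
      rw [Finset.card_compl, Finset.card_compl, hcs, hct]
    let e1 : {x // x ∈ s₀} ≃ {x // x ∈ t} := Finset.equivOfCardEq (hcs.trans hct.symm)
    let e2 : {x // ¬ x ∈ s₀} ≃ {x // ¬ x ∈ t} :=
      ((Equiv.subtypeEquivRight fun x => (Finset.mem_compl (s := s₀) (a := x)).symm).trans
        (Finset.equivOfCardEq hcc)).trans
        (Equiv.subtypeEquivRight fun x => Finset.mem_compl (s := t) (a := x))
    let σ : Equiv.Perm (Fin d) :=
      ((Equiv.sumCompl (· ∈ s₀)).symm.trans (e1.sumCongr e2)).trans (Equiv.sumCompl (· ∈ t))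
    have hσs : ∀ i ∈ s₀, σ i ∈ t := by
      intro i hi
      simp only [σ, Equiv.trans_apply, Equiv.sumCompl_symm_apply_of_pos hi,
        Equiv.sumCongr_apply, Sum.map_inl, Equiv.sumCompl_apply_inl]
      exact (e1 ⟨i, hi⟩).2
    have himg : s₀.image σ = t := by
      apply Finset.eq_of_subset_of_card_le
      · intro j hj
        obtain ⟨i, hi, rfl⟩ := Finset.mem_image.mp hj
        exact hσs i hi
      · rw [Finset.card_image_of_injective _ σ.injective, hcs, hct]
    obtain ⟨g, hg⟩ := hgal σ
    refine ⟨g, ?_⟩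
    calc g (β s₀) = ∑ i ∈ s₀, g (α i) := map_sum g α s₀
      _ = ∑ i ∈ s₀, α (σ i) := Finset.sum_congr rfl fun i _ => hg i
      _ = ∑ j ∈ s₀.image σ, α j := (Finset.sum_image (fun x _ y _ h => σ.injective h)).symm
      _ = β t := by rw [himg]
  -- all subset sums are roots of the minimal polynomial
  set m := (minpoly K (β s₀)).map (algebraMap K L) with hm
  have hm0 : m ≠ 0 := map_ne_zero (minpoly.ne_zero hxint)
  have hroots' : ∀ t ∈ 𝒮, β t ∈ m.roots := by
    intro t ht
    obtain ⟨g, hg⟩ := htrans t ht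
    rw [mem_roots hm0]
    show eval (β t) m = 0
    rw [hm, eval_map, ← aeval_def, ← hg, aeval_algHom_apply g (β s₀) (minpoly K (β s₀)),
      minpoly.aeval, map_zero]
  -- degree bound for the minimal polynomial
  have hcard : Nat.choose d c ≤ (minpoly K (β s₀)).natDegree := by
    have h1 : (𝒮.image β) ⊆ m.roots.toFinset := by
      intro x hx
      obtain ⟨t, ht, rfl⟩ := Finset.mem_image.mp hx
      exact Multiset.mem_toFinset.mpr (hroots' t ht)
    calc Nat.choose d c = 𝒮.card := by rw [h𝒮, Finset.card_powersetCard]; simp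
      _ = (𝒮.image β).card := (Finset.card_image_of_injOn hinj).symm
      _ ≤ m.roots.toFinset.card := Finset.card_le_card h1
      _ ≤ Multiset.card m.roots := Multiset.toFinset_card_le _
      _ ≤ m.natDegree := m.card_roots'
      _ = (minpoly K (β s₀)).natDegree := natDegree_map _
  have hassoc : Associated (minpoly K (β s₀)) Q :=
    Polynomial.associated_of_dvd_of_natDegree_le hdvd hQmonic.ne_zero
      (by rw [hQdeg]; exact hcard)
  have heq : minpoly K (β s₀) = Q :=
    Polynomial.eq_of_monic_of_associated (minpoly.monic hxint) hQmonic hassoc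
  exact ⟨Q, hQ, hQdeg, heq ▸ minpoly.irreducible hxint⟩
end

section
/- Let d and n be natural numbers. In the formal power series ring ℚ[[x,y]], the series (1 − x − y)^{d+1} is invertible, and the coefficient of x^n y^n in its inverse (1 − x − y)^{−(d+1)} equals C(2n+d, n)·C(n+d, d). Equivalently, the diagonal of the rational power series 1/(1−x−y)^{d+1} is Σ_{n≥0} C(2n+d,n)·C(n+d,d)·t^n. -/
open MvPowerSeries Finsupp

noncomputable def Gaux (d : ℕ) : MvPowerSeries (Fin 2) ℚ :=
  fun m => ((m 0 + m 1 + d).choose d : ℚ) * ((m 0 + m 1).choose (m 0) : ℚ)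

lemma coeff_Gaux (d : ℕ) (m : Fin 2 →₀ ℕ) :
    MvPowerSeries.coeff m (Gaux d) =
      ((m 0 + m 1 + d).choose d : ℚ) * ((m 0 + m 1).choose (m 0) : ℚ) := rfl

lemma coeff_X_mul' (s : Fin 2) (φ : MvPowerSeries (Fin 2) ℚ) (m : Fin 2 →₀ ℕ) :
    MvPowerSeries.coeff m (MvPowerSeries.X s * φ) =
      if m s = 0 then 0 else MvPowerSeries.coeff (m - Finsupp.single s 1) φ := by
  rw [MvPowerSeries.coeff_mul]
  split_ifs with h
  · apply Finset.sum_eq_zero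
    rintro ⟨a, b⟩ hab
    rw [Finset.HasAntidiagonal.mem_antidiagonal] at hab
    rw [MvPowerSeries.coeff_X]
    split_ifs with ha
    · exfalso
      change a = Finsupp.single s 1 at ha
      subst ha
      have := congrArg (fun f : Fin 2 →₀ ℕ => f s) hab
      simp [h, Finsupp.single_apply] at this
    · exact zero_mul _
  · have hle : Finsupp.single s 1 ≤ m := by
      rw [Finsupp.single_le_iff]
      omega
    rw [Finset.sum_eq_single (Finsupp.single s 1, m - Finsupp.single s 1)]
    · rw [MvPowerSeries.coeff_X, if_pos rfl, one_mul]
    · rintro ⟨a, b⟩ hab hne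
      rw [Finset.HasAntidiagonal.mem_antidiagonal] at hab
      rw [MvPowerSeries.coeff_X]
      split_ifs with ha
      · exfalso
        apply hne
        change a = Finsupp.single s 1 at ha
        subst ha
        have hb : b = m - Finsupp.single s 1 := by
          ext t
          have := congrArg (fun f : Fin 2 →₀ ℕ => f t) hab
          simp [Finsupp.single_apply] at this ⊢
          omega
        rw [Prod.mk.injEq]
        exact ⟨rfl, hb⟩
      · exact zero_mul _
    · intro hni
      exfalso
      apply hni
      rw [Finset.HasAntidiagonal.mem_antidiagonal, add_comm, tsub_add_cancel_of_le hle]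

lemma coeff_identity (i j d : ℕ) :
    ((i + j + (d + 1)).choose (d + 1) : ℚ) * ((i + j).choose i : ℚ)
      - (if i = 0 then 0 else
          ((i - 1 + j + (d + 1)).choose (d + 1) : ℚ) * ((i - 1 + j).choose (i - 1) : ℚ))
      - (if j = 0 then 0 else
          ((i + (j - 1) + (d + 1)).choose (d + 1) : ℚ) * ((i + (j - 1)).choose i : ℚ))
    = ((i + j + d).choose d : ℚ) * ((i + j).choose i : ℚ) := by
  rcases i with _ | a <;> rcases j with _ | b
  · simp
  · simp only [if_neg (Nat.succ_ne_zero b), if_pos rfl, Nat.add_sub_cancel, sub_zero,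
      Nat.choose_zero_right, Nat.cast_one, mul_one]
    have e1 : 0 + (b + 1) + (d + 1) = b + d + 1 + 1 := by omega
    have e2 : 0 + b + (d + 1) = b + d + 1 := by omega
    have e3 : 0 + (b + 1) + d = b + d + 1 := by omega
    rw [e1, e2, e3, Nat.choose_succ_succ' (b + d + 1) d]
    push_cast
    ring
  · simp only [if_neg (Nat.succ_ne_zero a), if_pos rfl, Nat.add_sub_cancel, sub_zero]
    have e1 : a + 1 + 0 + (d + 1) = a + d + 1 + 1 := by omega
    have e2 : a + 0 + (d + 1) = a + d + 1 := by omega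
    have e3 : a + 1 + 0 + d = a + d + 1 := by omega
    have e4 : a + 1 + 0 = a + 1 := by omega
    have e5 : a + 0 = a := by omega
    rw [e1, e2, e3, e4, e5, Nat.choose_succ_succ' (a + d + 1) d, Nat.choose_self,
      Nat.choose_self]
    push_cast
    ring
  · simp only [if_neg (Nat.succ_ne_zero a), if_neg (Nat.succ_ne_zero b), Nat.add_sub_cancel]
    have e1 : a + 1 + (b + 1) + (d + 1) = a + b + 1 + d + 1 + 1 := by omega
    have e3 : a + (b + 1) + (d + 1) = a + b + 1 + d + 1 := by omega
    have e5 : a + 1 + b + (d + 1) = a + b + 1 + d + 1 := by omega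
    have e7 : a + 1 + (b + 1) + d = a + b + 1 + d + 1 := by omega
    have e2 : a + 1 + (b + 1) = a + b + 1 + 1 := by omega
    have e4 : a + (b + 1) = a + b + 1 := by omega
    have e6 : a + 1 + b = a + b + 1 := by omega
    rw [e1, e3, e5, e7, e2, e4, e6, Nat.choose_succ_succ' (a + b + 1 + d + 1) d,
      Nat.choose_succ_succ' (a + b + 1) a]
    push_cast
    ring

lemma Gaux_step (d : ℕ) :
    (1 - MvPowerSeries.X 0 - MvPowerSeries.X 1 : MvPowerSeries (Fin 2) ℚ) * Gaux (d + 1)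
      = Gaux d := by
  ext m
  rw [sub_mul, sub_mul, one_mul, map_sub, map_sub, coeff_X_mul', coeff_X_mul',
    coeff_Gaux, coeff_Gaux, coeff_Gaux, coeff_Gaux]
  have e01 : ((m - Finsupp.single (0 : Fin 2) 1 : Fin 2 →₀ ℕ)) 0 = m 0 - 1 := by simp
  have e02 : ((m - Finsupp.single (0 : Fin 2) 1 : Fin 2 →₀ ℕ)) 1 = m 1 := by
    simp [Finsupp.single_apply]
  have e11 : ((m - Finsupp.single (1 : Fin 2) 1 : Fin 2 →₀ ℕ)) 1 = m 1 - 1 := by simp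
  have e10 : ((m - Finsupp.single (1 : Fin 2) 1 : Fin 2 →₀ ℕ)) 0 = m 0 := by
    simp [Finsupp.single_apply]
  rw [e01, e02, e11, e10]
  exact coeff_identity (m 0) (m 1) d

lemma coeff_identity0 (i j : ℕ) :
    ((i + j + 0).choose 0 : ℚ) * ((i + j).choose i : ℚ)
      - (if i = 0 then 0 else
          ((i - 1 + j + 0).choose 0 : ℚ) * ((i - 1 + j).choose (i - 1) : ℚ))
      - (if j = 0 then 0 else
          ((i + (j - 1) + 0).choose 0 : ℚ) * ((i + (j - 1)).choose i : ℚ))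
    = if i = 0 ∧ j = 0 then 1 else 0 := by
  rcases i with _ | a <;> rcases j with _ | b
  · simp
  · simp [Nat.add_sub_cancel]
  · simp [Nat.add_sub_cancel, Nat.choose_self]
  · simp only [if_neg (Nat.succ_ne_zero a), if_neg (Nat.succ_ne_zero b), Nat.add_sub_cancel,
      Nat.choose_zero_right, Nat.cast_one, one_mul,
      if_neg (by simp : ¬(a + 1 = 0 ∧ b + 1 = 0))]
    have e2 : a + 1 + (b + 1) = a + b + 1 + 1 := by omega
    have e4 : a + (b + 1) = a + b + 1 := by omega
    have e6 : a + 1 + b = a + b + 1 := by omega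
    rw [e2, e4, e6, Nat.choose_succ_succ' (a + b + 1) a]
    push_cast
    ring

lemma Gaux_base :
    (1 - MvPowerSeries.X 0 - MvPowerSeries.X 1 : MvPowerSeries (Fin 2) ℚ) * Gaux 0 = 1 := by
  ext m
  rw [sub_mul, sub_mul, one_mul, map_sub, map_sub, coeff_X_mul', coeff_X_mul',
    coeff_Gaux, coeff_Gaux, coeff_Gaux]
  have e01 : ((m - Finsupp.single (0 : Fin 2) 1 : Fin 2 →₀ ℕ)) 0 = m 0 - 1 := by simp
  have e02 : ((m - Finsupp.single (0 : Fin 2) 1 : Fin 2 →₀ ℕ)) 1 = m 1 := by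
    simp [Finsupp.single_apply]
  have e11 : ((m - Finsupp.single (1 : Fin 2) 1 : Fin 2 →₀ ℕ)) 1 = m 1 - 1 := by simp
  have e10 : ((m - Finsupp.single (1 : Fin 2) 1 : Fin 2 →₀ ℕ)) 0 = m 0 := by
    simp [Finsupp.single_apply]
  rw [e01, e02, e11, e10]
  classical
  rw [MvPowerSeries.coeff_one]
  have hm : (m = 0) ↔ (m 0 = 0 ∧ m 1 = 0) := by
    constructor
    · intro h; simp [h]
    · intro ⟨h0, h1⟩
      ext t
      fin_cases t <;> simpa
  have hr : (if m = 0 then (1 : ℚ) else 0) = (if m 0 = 0 ∧ m 1 = 0 then 1 else 0) := by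
    split_ifs with h h' h'
    · rfl
    · exact absurd (hm.mp h) h'
    · exact absurd (hm.mpr h') h
    · rfl
  rw [hr]
  exact coeff_identity0 (m 0) (m 1)

lemma mul_pow_Gaux (d : ℕ) :
    (1 - MvPowerSeries.X 0 - MvPowerSeries.X 1 : MvPowerSeries (Fin 2) ℚ) ^ (d + 1) * Gaux d
      = 1 := by
  induction d with
  | zero => simpa using Gaux_base
  | succ d ih =>
      have : (1 - MvPowerSeries.X 0 - MvPowerSeries.X 1 : MvPowerSeries (Fin 2) ℚ) ^ (d + 2)
          * Gaux (d + 1)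
          = (1 - MvPowerSeries.X 0 - MvPowerSeries.X 1 : MvPowerSeries (Fin 2) ℚ) ^ (d + 1)
            * ((1 - MvPowerSeries.X 0 - MvPowerSeries.X 1) * Gaux (d + 1)) := by
        ring
      rw [this, Gaux_step, ih]

theorem diag_inv_one_sub_x_sub_y_pow (d n : ℕ) :
    IsUnit ((1 - MvPowerSeries.X 0 - MvPowerSeries.X 1 : MvPowerSeries (Fin 2) ℚ) ^ (d + 1)) ∧
    MvPowerSeries.coeff (Finsupp.single 0 n + Finsupp.single 1 n)
      (((1 - MvPowerSeries.X 0 - MvPowerSeries.X 1 : MvPowerSeries (Fin 2) ℚ) ^ (d + 1))⁻¹) =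
      Nat.choose (2 * n + d) n * Nat.choose (n + d) d := by
  have hc : MvPowerSeries.constantCoeff
      ((1 - MvPowerSeries.X 0 - MvPowerSeries.X 1 : MvPowerSeries (Fin 2) ℚ) ^ (d + 1)) ≠ 0 := by
    rw [map_pow, map_sub, map_sub, map_one, MvPowerSeries.constantCoeff_X,
      MvPowerSeries.constantCoeff_X]
    norm_num
  have hmul := mul_pow_Gaux d
  constructor
  · exact IsUnit.of_mul_eq_one _ hmul
  · have hinv : ((1 - MvPowerSeries.X 0 - MvPowerSeries.X 1 :
        MvPowerSeries (Fin 2) ℚ) ^ (d + 1))⁻¹ = Gaux d := by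
      rw [MvPowerSeries.inv_eq_iff_mul_eq_one hc]
      rw [mul_comm] at hmul
      exact hmul
    rw [hinv, coeff_Gaux]
    have h0 : ((Finsupp.single (0 : Fin 2) n + Finsupp.single 1 n : Fin 2 →₀ ℕ)) 0 = n := by
      simp [Finsupp.single_apply]
    have h1 : ((Finsupp.single (0 : Fin 2) n + Finsupp.single 1 n : Fin 2 →₀ ℕ)) 1 = n := by
      simp [Finsupp.single_apply]
    rw [h0, h1]
    have key : (n + n + d).choose d * (n + n).choose n
        = (2 * n + d).choose n * (n + d).choose d := by
      have h1 : (n + n + d).choose d = (n + n + d).choose (n + n) := by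
        have h := Nat.choose_symm (show d ≤ n + n + d by omega)
        rw [show n + n + d - d = n + n by omega] at h
        exact h.symm
      have h2 := Nat.choose_mul (n := n + n + d) (show n ≤ n + n by omega)
      rw [h1, h2, show n + n + d - n = n + d by omega, show n + n - n = n by omega,
        show 2 * n + d = n + n + d by omega]
      congr 1
      have h := Nat.choose_symm (show d ≤ n + d by omega)
      rw [show n + d - d = n by omega] at h
      exact h
    exact_mod_cast key
end

section
/- Let d be a natural number and let D(t) = Σ_{n≥0} C(2n+d, n)·C(n+d, d)·t^n ∈ ℚ[[t]] (the diagonal of 1/(1−x−y)^{d+1}). Then the following identity of formal power series holds in ℚ[[t]]: (1 − 4t)^{2d+1} · D(t)² = ( Σ_{k=0}^{⌊d/2⌋} C(d, 2k)·C(2k, k)·t^k )². In other words, D(t) is a root of the polynomial (1−4t)^{2d+1}·z² − (Σ_{k=0}^{⌊d/2⌋} C(d,2k)·C(2k,k)·t^k)² ∈ ℚ[t][z]. -/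
open PowerSeries

private noncomputable def Dps (d : ℕ) : PowerSeries ℚ :=
  PowerSeries.mk fun n : ℕ => (Nat.choose (2 * n + d) n * Nat.choose (n + d) d : ℚ)

private noncomputable def Pps (d : ℕ) : PowerSeries ℚ :=
  PowerSeries.mk fun k : ℕ => (Nat.choose d (2 * k) * Nat.choose (2 * k) k : ℚ)

private lemma rkey2 (n d : ℕ) :
    ((d:ℚ)+1) * ((2*n+d+1).choose n) * ((n+d+1).choose (d+1)) =
      (2*(n:ℚ)+d+1) * ((2*n+d).choose n) * ((n+d).choose d) := by
  rw [Nat.cast_choose ℚ (show n ≤ 2*n+d+1 by omega),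
      Nat.cast_choose ℚ (show d+1 ≤ n+d+1 by omega),
      Nat.cast_choose ℚ (show n ≤ 2*n+d by omega),
      Nat.cast_choose ℚ (show d ≤ n+d by omega),
      show 2*n+d+1-n = n+d+1 by omega, show n+d+1-(d+1) = n by omega,
      show 2*n+d-n = n+d by omega, show n+d-d = n by omega]
  have h1 : ((2*n+d+1).factorial : ℚ) = (2*n+d+1) * ((2*n+d).factorial) := by
    rw [show 2*n+d+1 = (2*n+d)+1 from rfl, Nat.factorial_succ]; push_cast; ring
  have h2 : (((n+d+1).factorial) : ℚ) = (n+d+1) * ((n+d).factorial) := by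
    rw [show n+d+1 = (n+d)+1 from rfl, Nat.factorial_succ]; push_cast; ring
  have h3 : (((d+1).factorial) : ℚ) = (d+1) * d.factorial := by
    rw [Nat.factorial_succ]; push_cast; ring
  rw [h1, h2, h3]
  have f1 : (((n).factorial) : ℚ) ≠ 0 := by exact_mod_cast (Nat.factorial_pos n).ne'
  have f2 : (((d).factorial) : ℚ) ≠ 0 := by exact_mod_cast (Nat.factorial_pos d).ne'
  have f3 : ((((n+d)).factorial) : ℚ) ≠ 0 := by exact_mod_cast (Nat.factorial_pos _).ne'
  have f4 : ((n:ℚ)+d+1) ≠ 0 := by positivity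
  have f5 : ((d:ℚ)+1) ≠ 0 := by positivity
  field_simp

private lemma rkey3 (d k : ℕ) :
    ((d:ℚ)+1) * ((d+1).choose (2*k+2)) * ((2*k+2).choose (k+1)) =
      ((d:ℚ)+2*k+3) * (d.choose (2*k+2)) * ((2*k+2).choose (k+1)) +
        4*((d:ℚ)-2*k) * (d.choose (2*k)) * ((2*k).choose k) := by
  rcases lt_trichotomy d (2*k+1) with h | h | h
  · rw [Nat.choose_eq_zero_of_lt (by omega : d+1 < 2*k+2),
        Nat.choose_eq_zero_of_lt (by omega : d < 2*k+2)]
    rcases eq_or_lt_of_le (show d ≤ 2*k by omega) with h2 | h2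
    · subst h2; push_cast; ring
    · rw [Nat.choose_eq_zero_of_lt h2]; push_cast; ring
  · subst h
    rw [Nat.choose_eq_zero_of_lt (by omega : 2*k+1 < 2*k+2), Nat.choose_self,
        show 2*k+1 = (2*k)+1 from rfl, Nat.choose_succ_self_right]
    have h0 := Nat.succ_mul_centralBinom_succ k
    unfold Nat.centralBinom at h0
    rw [show 2*(k+1) = 2*k+2 by ring] at h0
    have hQ : ((k:ℚ)+1) * ((2*k+2).choose (k+1)) = 2*(2*(k:ℚ)+1) * ((2*k).choose k) := by
      exact_mod_cast h0
    push_cast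
    linear_combination 2 * hQ
  · obtain ⟨m, rfl⟩ : ∃ m, d = 2*k+2+m := ⟨d - (2*k+2), by omega⟩
    rw [Nat.cast_choose ℚ (show 2*k+2 ≤ 2*k+2+m+1 by omega),
        Nat.cast_choose ℚ (show k+1 ≤ 2*k+2 by omega),
        Nat.cast_choose ℚ (show 2*k+2 ≤ 2*k+2+m by omega),
        Nat.cast_choose ℚ (show 2*k ≤ 2*k+2+m by omega),
        Nat.cast_choose ℚ (show k ≤ 2*k by omega),
        show 2*k+2+m+1-(2*k+2) = m+1 by omega,
        show 2*k+2-(k+1) = k+1 by omega,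
        show 2*k+2+m-(2*k+2) = m by omega,
        show 2*k+2+m-2*k = m+2 by omega,
        show 2*k-k = k by omega]
    have e1 : ((2*k+2+m+1).factorial : ℚ) = (2*k+2+m+1) * (2*k+2+m).factorial := by
      rw [show 2*k+2+m+1 = (2*k+2+m)+1 from rfl, Nat.factorial_succ]; push_cast; ring
    have e2 : ((m+1).factorial : ℚ) = (m+1) * m.factorial := by
      rw [Nat.factorial_succ]; push_cast; ring
    have e3 : ((m+2).factorial : ℚ) = (m+2) * (m+1) * m.factorial := by
      rw [show m+2 = (m+1)+1 from rfl, Nat.factorial_succ, Nat.factorial_succ]; push_cast; ring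
    have e4 : ((2*k+2).factorial : ℚ) = (2*k+2) * (2*k+1) * (2*k).factorial := by
      rw [show 2*k+2 = (2*k+1)+1 from rfl, Nat.factorial_succ, show 2*k+1 = (2*k)+1 from rfl,
        Nat.factorial_succ]; push_cast; ring
    have e5 : ((k+1).factorial : ℚ) = (k+1) * k.factorial := by
      rw [Nat.factorial_succ]; push_cast; ring
    rw [e1, e2, e3, e4, e5]
    have f1 : ((k.factorial) : ℚ) ≠ 0 := by exact_mod_cast (Nat.factorial_pos _).ne'
    have f2 : ((m.factorial) : ℚ) ≠ 0 := by exact_mod_cast (Nat.factorial_pos _).ne'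
    have f3 : (((2*k).factorial) : ℚ) ≠ 0 := by exact_mod_cast (Nat.factorial_pos _).ne'
    have f4 : (((2*k+2+m).factorial) : ℚ) ≠ 0 := by exact_mod_cast (Nat.factorial_pos _).ne'
    have g1 : ((m:ℚ)+1) ≠ 0 := by positivity
    have g2 : ((m:ℚ)+2) ≠ 0 := by positivity
    have g3 : (2*(k:ℚ)+2) ≠ 0 := by positivity
    have g4 : ((k:ℚ)+1) ≠ 0 := by positivity
    push_cast
    field_simp
    ring

private lemma coeff_zero_X_mul' (f : PowerSeries ℚ) : (coeff 0) (X * f) = 0 := by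
  simp [coeff_zero_eq_constantCoeff, map_mul]

private lemma coeff_X_mul_deriv (f : PowerSeries ℚ) (n : ℕ) :
    (coeff n) (X * d⁄dX ℚ f) = n * (coeff n) f := by
  cases n with
  | zero => simp [coeff_zero_X_mul']
  | succ m => rw [coeff_succ_X_mul, coeff_derivative]; push_cast; ring

private lemma coeff_cast_mul (a : ℚ) {c : PowerSeries ℚ} (hc : c = C a)
    (f : PowerSeries ℚ) (n : ℕ) :
    coeff n (c * f) = a * coeff n f := by rw [hc, coeff_C_mul]

private lemma hU : d⁄dX ℚ (1 - 4*X : PowerSeries ℚ) = -4 := by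
  rw [map_sub, show (4*X : PowerSeries ℚ) = (4:ℚ) • X by
      rw [smul_eq_C_mul]; norm_num [map_ofNat],
    Derivation.map_smul]
  simp [smul_eq_C_mul, map_ofNat]

private lemma R0' : d⁄dX ℚ (Dps 0) = 4 * (X * d⁄dX ℚ (Dps 0)) + 2 * Dps 0 := by
  ext n
  rw [map_add, coeff_derivative,
    coeff_cast_mul (4:ℚ) (by rw [map_ofNat]) (X * d⁄dX ℚ (Dps 0)) n,
    coeff_cast_mul (2:ℚ) (by rw [map_ofNat]) (Dps 0) n,
    coeff_X_mul_deriv]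
  simp only [Dps, coeff_mk]
  have h0 := Nat.succ_mul_centralBinom_succ n
  unfold Nat.centralBinom at h0
  have hQ : ((n:ℚ)+1) * ((2*(n+1)).choose (n+1)) = 2*(2*(n:ℚ)+1) * ((2*n).choose n) := by
    exact_mod_cast h0
  rw [show 2*(n+1)+0 = 2*(n+1) by omega, show (n+1)+0 = n+1 by omega,
    show 2*n+0 = 2*n by omega, show n+0 = n by omega]
  simp only [Nat.choose_zero_right, Nat.cast_one, mul_one]
  rw [show 2*(n+1) = 2*n+2 by ring] at hQ ⊢
  linear_combination hQ

private lemma R2 (d : ℕ) :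
    ((d : PowerSeries ℚ) + 1) * Dps (d+1) =
      2 * (X * d⁄dX ℚ (Dps d)) + ((d : PowerSeries ℚ) + 1) * Dps d := by
  have hc : ((d : PowerSeries ℚ) + 1) = C ((d:ℚ)+1) := by
    rw [map_add, map_one, map_natCast]
  ext n
  rw [map_add, coeff_cast_mul ((d:ℚ)+1) hc (Dps (d+1)) n,
    coeff_cast_mul (2:ℚ) (by rw [map_ofNat]) (X * d⁄dX ℚ (Dps d)) n,
    coeff_cast_mul ((d:ℚ)+1) hc (Dps d) n, coeff_X_mul_deriv]
  simp only [Dps, coeff_mk]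
  rw [show 2*n+(d+1) = 2*n+d+1 by omega, show n+(d+1) = n+d+1 by omega]
  linear_combination rkey2 n d

private lemma R3 (d : ℕ) :
    ((d : PowerSeries ℚ) + 1) * Pps (d+1) =
      ((d : PowerSeries ℚ) + 1) * Pps d + (4 * (d : PowerSeries ℚ)) * (X * Pps d) +
        2 * (X * d⁄dX ℚ (Pps d)) - 8 * (X * (X * d⁄dX ℚ (Pps d))) := by
  have hc : ((d : PowerSeries ℚ) + 1) = C ((d:ℚ)+1) := by
    rw [map_add, map_one, map_natCast]
  have hc2 : (4 * (d : PowerSeries ℚ)) = C (4*(d:ℚ)) := by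
    rw [map_mul, map_natCast, map_ofNat]
  ext n
  rw [map_sub, map_add, map_add,
    coeff_cast_mul ((d:ℚ)+1) hc (Pps (d+1)) n,
    coeff_cast_mul ((d:ℚ)+1) hc (Pps d) n,
    coeff_cast_mul (4*(d:ℚ)) hc2 (X * Pps d) n,
    coeff_cast_mul (2:ℚ) (by rw [map_ofNat]) (X * d⁄dX ℚ (Pps d)) n,
    coeff_cast_mul (8:ℚ) (by rw [map_ofNat]) (X * (X * d⁄dX ℚ (Pps d))) n,
    coeff_X_mul_deriv]
  cases n with
  | zero =>
    rw [coeff_zero_X_mul', coeff_zero_X_mul']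
    simp [Pps]
  | succ m =>
    rw [coeff_succ_X_mul, coeff_succ_X_mul, coeff_X_mul_deriv]
    simp only [Pps, coeff_mk]
    rw [show 2*(m+1) = 2*m+2 by ring]
    push_cast
    linear_combination rkey3 d m

private lemma Hpow (d : ℕ) :
    (1 - 4*X) * d⁄dX ℚ ((1 - 4*X : PowerSeries ℚ)^d) =
      -(4 * (d : PowerSeries ℚ)) * (1 - 4*X : PowerSeries ℚ)^d := by
  induction d with
  | zero => simp
  | succ d ih =>
    rw [pow_succ]
    rw [Derivation.leibniz]
    simp only [smul_eq_mul, hU]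
    push_cast
    linear_combination (1 - 4*X : PowerSeries ℚ) * ih

private lemma P0 : Pps 0 = 1 := by
  ext n
  cases n with
  | zero => simp [Pps]
  | succ m => simp [Pps, Nat.choose_eq_zero_of_lt (show 0 < 2*(m+1) by omega), coeff_one]

private lemma G (d : ℕ) : (1 - 4*X : PowerSeries ℚ)^d * Dps d = Pps d * Dps 0 := by
  induction d with
  | zero => simp [P0]
  | succ d ih =>
    have hder := congrArg (d⁄dX ℚ) ih
    simp only [Derivation.leibniz, smul_eq_mul] at hder
    have hr0 : (1 - 4*X : PowerSeries ℚ) * d⁄dX ℚ (Dps 0) = 2 * Dps 0 := by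
      linear_combination R0'
    have hpow := Hpow d
    have hr2 := R2 d
    have hr3 := R3 d
    have hne : ((d : PowerSeries ℚ) + 1) ≠ 0 := by
      intro h
      have h2 := congrArg (constantCoeff) h
      simp at h2
      exact_mod_cast h2
    apply mul_left_cancel₀ hne
    linear_combination ((1-4*X : PowerSeries ℚ) * (1-4*X : PowerSeries ℚ)^d) * hr2 +
      (2*X*(1-4*X : PowerSeries ℚ)) * hder + (-(2*X*Dps d)) * hpow +
      (2*X*Pps d) * hr0 + (-(Dps 0)) * hr3 +
      (((d : PowerSeries ℚ)+1)*(1-4*X : PowerSeries ℚ) + 8*(d : PowerSeries ℚ)*X) * ih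

private lemma L0 : (1 - 4*X : PowerSeries ℚ) * (Dps 0)^2 = 1 := by
  apply PowerSeries.derivative.ext
  · have hr0 : (1 - 4*X : PowerSeries ℚ) * d⁄dX ℚ (Dps 0) = 2 * Dps 0 := by
      linear_combination R0'
    rw [sq]
    simp only [Derivation.leibniz, smul_eq_mul, hU, Derivation.map_one_eq_zero]
    linear_combination (2 * Dps 0) * hr0
  · simp [Dps, map_mul, map_pow, map_sub, constantCoeff_mk]

private lemma Psum (d : ℕ) :
    (∑ k ∈ Finset.range (d / 2 + 1),
        PowerSeries.C (Nat.choose d (2 * k) * Nat.choose (2 * k) k : ℚ) *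
          PowerSeries.X ^ k) = Pps d := by
  ext n
  rw [map_sum]
  simp only [coeff_C_mul, coeff_X_pow, mul_ite, mul_one, mul_zero]
  rw [Finset.sum_ite_eq (Finset.range (d/2+1)) n
      (fun k => (Nat.choose d (2 * k) * Nat.choose (2 * k) k : ℚ))]
  simp only [Pps, coeff_mk]
  split_ifs with h
  · rfl
  · rw [Finset.mem_range, not_lt] at h
    have h2 : d < 2*n := by omega
    simp [Nat.choose_eq_zero_of_lt h2]

theorem diag_satisfies_quadratic (d : ℕ) :
    ((1 - 4 * PowerSeries.X : PowerSeries ℚ) ^ (2 * d + 1)) *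
        (PowerSeries.mk fun n : ℕ =>
          (Nat.choose (2 * n + d) n * Nat.choose (n + d) d : ℚ)) ^ 2 =
      (∑ k ∈ Finset.range (d / 2 + 1),
        PowerSeries.C (Nat.choose d (2 * k) * Nat.choose (2 * k) k : ℚ) *
          PowerSeries.X ^ k) ^ 2 := by
  rw [Psum d]
  have hD : (PowerSeries.mk fun n : ℕ =>
      (Nat.choose (2 * n + d) n * Nat.choose (n + d) d : ℚ)) = Dps d := rfl
  rw [hD]
  calc (1 - 4 * X : PowerSeries ℚ) ^ (2 * d + 1) * (Dps d)^2
      = ((1 - 4*X : PowerSeries ℚ)^d * Dps d)^2 * (1 - 4*X) := by ring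
    _ = (Pps d * Dps 0)^2 * (1 - 4*X) := by rw [G d]
    _ = (Pps d)^2 * ((1 - 4*X) * (Dps 0)^2) := by ring
    _ = (Pps d)^2 := by rw [L0, mul_one]
end

section
/- Let d be a natural number and work in the ring F[[t]] of formal power series over the field F = ℚ(y) of rational functions. The element 1 − 2y − t has invertible constant term 1 − 2y in F, so (y+t)^d/(1 − 2y − t)^{d+1} is a well-defined element of F[[t]]. Its coefficient of t^d equals ( Σ_{i=0}^{d} C(d,i)·C(d+i,i)·y^i·(1−2y)^{d−i} ) / (1−2y)^{2d+1}. -/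
open PowerSeries

lemma one_sub_two_X_ne_zero : (1 - 2 * RatFunc.X : RatFunc ℚ) ≠ 0 := by
  have h1 : (1 - 2 * RatFunc.X : RatFunc ℚ)
      = algebraMap (Polynomial ℚ) _ (1 - 2 * Polynomial.X) := by
    simp only [map_sub, map_mul, RatFunc.algebraMap_X, map_one, map_ofNat]
  rw [h1]
  apply RatFunc.algebraMap_ne_zero
  intro h
  have := congrArg (fun p => Polynomial.coeff p 1) h
  simp [Polynomial.coeff_one] at this

theorem coeff_residue_expansion (d : ℕ) :
    IsUnit (PowerSeries.constantCoeff (R := RatFunc ℚ)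
      (PowerSeries.C (R := RatFunc ℚ) (1 - 2 * RatFunc.X) - PowerSeries.X)) ∧
    PowerSeries.coeff (R := RatFunc ℚ) d
      ((PowerSeries.C (R := RatFunc ℚ) RatFunc.X + PowerSeries.X) ^ d *
        ((PowerSeries.C (R := RatFunc ℚ) (1 - 2 * RatFunc.X) - PowerSeries.X) ^ (d + 1))⁻¹) =
      (∑ i ∈ Finset.range (d + 1),
        (Nat.choose d i : RatFunc ℚ) * (Nat.choose (d + i) i : RatFunc ℚ) *
          RatFunc.X ^ i * (1 - 2 * RatFunc.X) ^ (d - i)) /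
        (1 - 2 * RatFunc.X) ^ (2 * d + 1) := by
  set F := RatFunc ℚ
  set y : F := RatFunc.X with hy
  set u : F := 1 - 2 * y with hudef
  have hu : u ≠ 0 := one_sub_two_X_ne_zero
  have hcc : constantCoeff (R := F) (C (R := F) u - X) = u := by simp
  constructor
  · rw [hcc]; exact isUnit_iff_ne_zero.mpr hu
  -- the explicit inverse g
  set g : F⟦X⟧ := C (R := F) (u⁻¹ ^ (d + 1)) *
      rescale u⁻¹ ((invOneSubPow F (d + 1)).val) with hg
  have hresc : rescale u⁻¹ (1 - X : F⟦X⟧) = 1 - C (R := F) u⁻¹ * X := by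
    rw [map_sub, map_one, rescale_X]
  have hfac : (C (R := F) u - X) = C (R := F) u * rescale u⁻¹ (1 - X) := by
    rw [hresc, mul_sub, mul_one, ← mul_assoc, ← map_mul,
      mul_inv_cancel₀ hu, map_one, one_mul]
  have key : (C (R := F) u) ^ (d + 1) * C (R := F) (u⁻¹ ^ (d + 1)) = 1 := by
    rw [← map_pow, ← map_mul, ← mul_pow, mul_inv_cancel₀ hu, one_pow, map_one]
  have key2 : (rescale u⁻¹ (1 - X : F⟦X⟧)) ^ (d + 1) *
      rescale u⁻¹ ((invOneSubPow F (d + 1)).val) = 1 := by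
    rw [← map_pow, ← map_mul, ← invOneSubPow_inv_eq_one_sub_pow,
      (invOneSubPow F (d + 1)).inv_val, map_one]
  have hmul : (C (R := F) u - X) ^ (d + 1) * g = 1 := by
    calc (C (R := F) u - X) ^ (d + 1) * g
        = ((C (R := F) u) ^ (d + 1) * C (R := F) (u⁻¹ ^ (d + 1))) *
          ((rescale u⁻¹ (1 - X : F⟦X⟧)) ^ (d + 1) *
            rescale u⁻¹ ((invOneSubPow F (d + 1)).val)) := by
          rw [hfac, hg, mul_pow]; ring
      _ = 1 := by rw [key, key2, one_mul]
  have hinv : ((C (R := F) u - X) ^ (d + 1))⁻¹ = g := by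
    rw [PowerSeries.inv_eq_iff_mul_eq_one (by rw [map_pow, hcc]; exact pow_ne_zero _ hu)]
    rw [mul_comm]
    exact hmul
  rw [hinv]
  -- expand (C y + X)^d
  have hexp : (C (R := F) y + X) ^ d * g =
      ∑ k ∈ Finset.range (d + 1),
        C (R := F) (y ^ k * (d.choose k : F)) * (X ^ (d - k) * g) := by
    rw [add_pow, Finset.sum_mul]
    apply Finset.sum_congr rfl
    intro k _
    rw [map_mul, ← map_pow, map_natCast]
    ring
  rw [hexp, map_sum]
  have hcoeff : ∀ k ∈ Finset.range (d + 1),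
      (coeff (R := F) d) (C (R := F) (y ^ k * (d.choose k : F)) * (X ^ (d - k) * g)) =
        y ^ k * (d.choose k : F) * (u⁻¹ ^ (d + 1) * (u⁻¹ ^ k * ((d + k).choose d : F))) := by
    intro k hk
    have hkd : k ≤ d := Finset.mem_range_succ_iff.mp hk
    rw [coeff_C_mul, coeff_X_pow_mul', if_pos (by omega : d - k ≤ d)]
    have hdd : d - (d - k) = k := by omega
    rw [hdd]
    congr 1
    rw [hg, coeff_C_mul, coeff_rescale, invOneSubPow_val_succ_eq_mk_add_choose, coeff_mk]
  rw [Finset.sum_congr rfl hcoeff]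
  rw [eq_div_iff (pow_ne_zero _ hu), Finset.sum_mul]
  apply Finset.sum_congr rfl
  intro k hk
  have hkd : k ≤ d := Finset.mem_range_succ_iff.mp hk
  have hch : ((d + k).choose k : F) = ((d + k).choose d : F) := by
    rw [← Nat.choose_symm (Nat.le_add_right d k), Nat.add_sub_cancel_left]
  rw [hch]
  have hpow : u ^ (d - k) * u ^ (d + 1 + k) = u ^ (2 * d + 1) := by
    rw [← pow_add]; congr 1; omega
  field_simp
  rw [← hpow]
  calc _ = (d.choose k : F) * ((d + k).choose d : F) * y ^ k * u ^ (d - k) * (u⁻¹ ^ (d + 1 + k) * u ^ (d + 1 + k)) := by ring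
    _ = _ := by rw [← mul_pow, inv_mul_cancel₀ hu, one_pow, mul_one]
end
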